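/- arXiv:1204.4605 — 5 statements merged into one kernel-verified Lean document; each statement's English description precedes it below -/
import Mathlib

section
/- For every positive integer Q and every real number α, |∏_{r=0}^{2Q−1} (1 − e^{2πiα·2^r})| ≤ (2/√3) · 2^{2Qλ}, where λ = ln 3 / ln 4. -/
open Finset

lemma gpb_pair_bound (θ : ℝ) (h : Real.sqrt 3 < 2 * |Real.sin θ|) :
    (2 * |Real.sin θ|) * (2 * |Real.sin (2 * θ)|) ≤ 3 := by
  have hpyth := Real.sin_sq_add_cos_sq θ
  have hc2 : Real.cos θ ^ 2 < 1 / 4 := by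
    have h3 : (Real.sqrt 3) ^ 2 = 3 := Real.sq_sqrt (by norm_num)
    have habs : Real.sqrt 3 / 2 < |Real.sin θ| := by linarith
    have h2 : (Real.sqrt 3 / 2) ^ 2 < |Real.sin θ| ^ 2 := by
      apply pow_lt_pow_left₀ habs (by positivity)
      norm_num
    rw [sq_abs] at h2
    nlinarith
  have hcle : |Real.cos θ| ≤ 1 / 2 := by
    rw [abs_le]
    constructor <;> nlinarith [sq_abs (Real.cos θ), abs_nonneg (Real.cos θ)]
  have hsin2 : |Real.sin (2 * θ)| = 2 * (|Real.sin θ| * |Real.cos θ|) := by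
    rw [Real.sin_two_mul, abs_mul, abs_mul]
    rw [abs_of_nonneg (by norm_num : (0:ℝ) ≤ 2)]
    ring
  rw [hsin2]
  set s := |Real.sin θ| with hs
  set c := |Real.cos θ| with hc
  have hs2 : s ^ 2 = Real.sin θ ^ 2 := sq_abs _
  have hc2' : c ^ 2 = Real.cos θ ^ 2 := sq_abs _
  have hcnn : 0 ≤ c := abs_nonneg _
  nlinarith [mul_nonneg (sub_nonneg.mpr hcle)
      (show (0:ℝ) ≤ 3 - 2*c - 4*c^2 by nlinarith)]

lemma gpb_key : ∀ n : ℕ, ∀ θ : ℝ,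
    ∏ r ∈ Finset.range n, (2 * |Real.sin (2 ^ r * θ)|) ≤
      2 * Real.sqrt 3 ^ n / Real.sqrt 3 := by
  intro n
  induction n using Nat.strong_induction_on with
  | _ n ih =>
    have hs3 : (0:ℝ) < Real.sqrt 3 := Real.sqrt_pos.mpr (by norm_num)
    have hs3sq : Real.sqrt 3 ^ 2 = 3 := Real.sq_sqrt (by norm_num)
    have hs3le : Real.sqrt 3 ≤ 2 := by
      nlinarith [Real.sq_sqrt (show (0:ℝ) ≤ 3 by norm_num), Real.sqrt_nonneg 3]
    match n with
    | 0 =>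
      intro θ
      simp only [Finset.range_zero, Finset.prod_empty, pow_zero]
      rw [le_div_iff₀ hs3]
      linarith
    | 1 =>
      intro θ
      simp only [Finset.prod_range_one, pow_zero, one_mul, pow_one]
      rw [mul_div_assoc, div_self (ne_of_gt hs3), mul_one]
      have h1 : |Real.sin θ| ≤ 1 := abs_le.mpr ⟨Real.neg_one_le_sin θ, Real.sin_le_one θ⟩
      linarith
    | (n+2) =>
      intro θ
      have hprodnn : ∀ (m : ℕ) (φ : ℝ), (0:ℝ) ≤ ∏ r ∈ Finset.range m, (2 * |Real.sin (2 ^ r * φ)|) := by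
        intro m φ
        apply Finset.prod_nonneg
        intro r _
        positivity
      by_cases hcase : 2 * |Real.sin θ| ≤ Real.sqrt 3
      · -- peel one factor
        have hpeel : ∏ r ∈ Finset.range (n+2), (2 * |Real.sin (2 ^ r * θ)|)
            = (∏ r ∈ Finset.range (n+1), (2 * |Real.sin (2 ^ r * (2 * θ))|)) * (2 * |Real.sin θ|) := by
          rw [Finset.prod_range_succ']
          congr 1
          · apply Finset.prod_congr rfl
            intro r _
            congr 2
            ring
          · norm_num
        rw [hpeel]
        have hih := ih (n+1) (by omega) (2 * θ)
        calc (∏ r ∈ Finset.range (n+1), (2 * |Real.sin (2 ^ r * (2 * θ))|)) * (2 * |Real.sin θ|)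
            ≤ (2 * Real.sqrt 3 ^ (n+1) / Real.sqrt 3) * Real.sqrt 3 := by
              apply mul_le_mul hih hcase (by positivity)
              positivity
          _ = 2 * Real.sqrt 3 ^ (n+2) / Real.sqrt 3 := by
              field_simp
              ring
      · -- peel two factors
        push_neg at hcase
        have hpeel : ∏ r ∈ Finset.range (n+2), (2 * |Real.sin (2 ^ r * θ)|)
            = ((∏ r ∈ Finset.range n, (2 * |Real.sin (2 ^ r * (4 * θ))|)) * (2 * |Real.sin (2 * θ)|)) * (2 * |Real.sin θ|) := by
          rw [Finset.prod_range_succ', Finset.prod_range_succ']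
          congr 2
          · apply Finset.prod_congr rfl
            intro r _
            congr 2
            ring
          · congr 2
            ring
          · norm_num
        rw [hpeel, mul_assoc]
        have hih := ih n (by omega) (4 * θ)
        have hpair : (2 * |Real.sin (2 * θ)|) * (2 * |Real.sin θ|) ≤ 3 := by
          rw [mul_comm]
          exact gpb_pair_bound θ hcase
        calc (∏ r ∈ Finset.range n, (2 * |Real.sin (2 ^ r * (4 * θ))|)) * ((2 * |Real.sin (2 * θ)|) * (2 * |Real.sin θ|))
            ≤ (2 * Real.sqrt 3 ^ n / Real.sqrt 3) * 3 := by
              apply mul_le_mul hih hpair (by positivity)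
              positivity
          _ = 2 * Real.sqrt 3 ^ (n+2) / Real.sqrt 3 := by
              rw [pow_add, hs3sq]
              ring

lemma gpb_norm (x : ℝ) : ‖1 - Complex.exp ((x : ℂ) * Complex.I)‖ = 2 * |Real.sin (x / 2)| := by
  have hsq : ‖1 - Complex.exp ((x : ℂ) * Complex.I)‖ ^ 2 = 2 - 2 * Real.cos x := by
    rw [Complex.sq_norm, Complex.exp_mul_I]
    have h1 : (1 : ℂ) - (Complex.cos x + Complex.sin x * Complex.I)
        = Complex.ofReal (1 - Real.cos x) + Complex.ofReal (- Real.sin x) * Complex.I := by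
      push_cast
      ring
    rw [h1, Complex.normSq_add_mul_I]
    nlinarith [Real.sin_sq_add_cos_sq x]
  have hhalf : 2 - 2 * Real.cos x = (2 * |Real.sin (x / 2)|) ^ 2 := by
    have h2 := Real.cos_two_mul (x / 2)
    have h3 := Real.sin_sq_add_cos_sq (x / 2)
    have h4 : Real.cos (2 * (x / 2)) = Real.cos x := by rw [show 2 * (x / 2) = x by ring]
    have h5 : |Real.sin (x / 2)| ^ 2 = Real.sin (x / 2) ^ 2 := sq_abs _
    nlinarith
  have hnn : (0:ℝ) ≤ ‖1 - Complex.exp ((x : ℂ) * Complex.I)‖ := norm_nonneg _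
  calc ‖1 - Complex.exp ((x : ℂ) * Complex.I)‖
      = Real.sqrt (‖1 - Complex.exp ((x : ℂ) * Complex.I)‖ ^ 2) := (Real.sqrt_sq hnn).symm
    _ = Real.sqrt ((2 * |Real.sin (x / 2)|) ^ 2) := by rw [hsq, hhalf]
    _ = 2 * |Real.sin (x / 2)| := Real.sqrt_sq (by positivity)

theorem gelfond_product_bound (Q : ℕ) (hQ : 1 ≤ Q) (α : ℝ) :
    ‖∏ r ∈ Finset.range (2 * Q), (1 - Complex.exp (2 * Real.pi * Complex.I * α * 2 ^ r))‖ ≤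
      2 / Real.sqrt 3 * (2 : ℝ) ^ ((2 * Q : ℝ) * (Real.log 3 / Real.log 4)) := by
  have hs3 : (0:ℝ) < Real.sqrt 3 := Real.sqrt_pos.mpr (by norm_num)
  have hs3sq : Real.sqrt 3 ^ 2 = 3 := Real.sq_sqrt (by norm_num)
  have hfac : ∀ r : ℕ, ‖1 - Complex.exp (2 * Real.pi * Complex.I * α * 2 ^ r)‖
      = 2 * |Real.sin (2 ^ r * (Real.pi * α))| := by
    intro r
    have h1 : (2 * Real.pi * Complex.I * α * 2 ^ r : ℂ)
        = (((2 * (2 ^ r * (Real.pi * α)) : ℝ)) : ℂ) * Complex.I := by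
      push_cast
      ring
    rw [h1, gpb_norm]
    rw [show (2 * (2 ^ r * (Real.pi * α))) / 2 = 2 ^ r * (Real.pi * α) by ring]
  have hexp : (2:ℝ) ^ ((2 * Q : ℝ) * (Real.log 3 / Real.log 4)) = 3 ^ Q := by
    have hlog4 : Real.log 4 = 2 * Real.log 2 := by
      rw [show (4:ℝ) = 2 ^ 2 by norm_num, Real.log_pow]
      push_cast
      ring
    have hlog2ne : Real.log 2 ≠ 0 := ne_of_gt (Real.log_pos (by norm_num))
    rw [Real.rpow_def_of_pos (by norm_num : (0:ℝ) < 2)]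
    have harg : Real.log 2 * ((2 * Q : ℝ) * (Real.log 3 / Real.log 4)) = (Q : ℝ) * Real.log 3 := by
      rw [hlog4]
      field_simp
    rw [harg, Real.exp_nat_mul, Real.exp_log (by norm_num : (0:ℝ) < 3)]
  calc ‖∏ r ∈ Finset.range (2 * Q), (1 - Complex.exp (2 * Real.pi * Complex.I * α * 2 ^ r))‖
      = ∏ r ∈ Finset.range (2 * Q), ‖1 - Complex.exp (2 * Real.pi * Complex.I * α * 2 ^ r)‖ :=
        norm_prod _ _
    _ = ∏ r ∈ Finset.range (2 * Q), (2 * |Real.sin (2 ^ r * (Real.pi * α))|) :=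
        Finset.prod_congr rfl (fun r _ => hfac r)
    _ ≤ 2 * Real.sqrt 3 ^ (2 * Q) / Real.sqrt 3 := gpb_key (2 * Q) (Real.pi * α)
    _ = 2 / Real.sqrt 3 * (2:ℝ) ^ ((2 * Q : ℝ) * (Real.log 3 / Real.log 4)) := by
        rw [hexp, pow_mul, hs3sq]
        ring
end

section
/- There is an absolute constant C > 0 such that for every real number α and every real X ≥ 2, |∑_{n ≤ X} ε(n) e^{2πiαn}| ≤ C · X^λ · ln X, where λ = ln 3 / ln 4 and the sum is over natural numbers n with 1 ≤ n ≤ X. -/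
open Finset Complex

/-- `eps n = 1` if the binary digit sum of `n` is even, and `-1` otherwise. -/
noncomputable def eps (n : ℕ) : ℂ :=
  if Even ((Nat.digits 2 n).sum) then 1 else -1

lemma eps_norm (n : ℕ) : ‖eps n‖ = 1 := by
  unfold eps; split <;> simp

lemma eps_two_mul (n : ℕ) : eps (2 * n) = eps n := by
  rcases Nat.eq_zero_or_pos n with h | h
  · simp [h]
  · unfold eps
    rw [Nat.digits_def' (by norm_num : 1 < 2) (by omega)]
    simp [Nat.mul_div_cancel_left, Nat.mul_mod_right]

lemma eps_two_mul_add_one (n : ℕ) : eps (2 * n + 1) = -eps n := by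
  unfold eps
  rw [Nat.digits_def' (by norm_num : 1 < 2) (by omega)]
  have h1 : (2 * n + 1) % 2 = 1 := by omega
  have h2 : (2 * n + 1) / 2 = n := by omega
  rw [h1, h2, List.sum_cons]
  have hiff : Even (1 + (Nat.digits 2 n).sum) ↔ ¬ Even ((Nat.digits 2 n).sum) := by
    rw [add_comm, Nat.even_add_one]
  rcases Nat.even_or_odd ((Nat.digits 2 n).sum) with h | h
  · rw [if_pos h, if_neg (by simp [hiff, h])]
  · rw [if_neg (Nat.not_even_iff_odd.2 h), if_pos (hiff.2 (Nat.not_even_iff_odd.2 h)), neg_neg]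

noncomputable def E (α : ℝ) : ℂ := Complex.exp (2 * Real.pi * Complex.I * α)

noncomputable def S (N : ℕ) (α : ℝ) : ℂ :=
  ∑ n ∈ Finset.range N, eps n * Complex.exp (2 * Real.pi * Complex.I * α * n)

lemma norm_exp_eq_one (α : ℝ) (n : ℕ) :
    ‖Complex.exp (2 * Real.pi * Complex.I * α * n)‖ = 1 := by
  rw [Complex.norm_exp]
  have : (2 * (Real.pi:ℂ) * Complex.I * α * n).re = 0 := by
    simp [Complex.mul_re, Complex.mul_im]
  rw [this, Real.exp_zero]

lemma norm_E (α : ℝ) : ‖E α‖ = 1 := by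
  have := norm_exp_eq_one α 1
  simpa [E] using this

lemma S_two_mul (M : ℕ) (α : ℝ) : S (2 * M) α = (1 - E α) * S M (2 * α) := by
  induction M with
  | zero => simp [S]
  | succ M ih =>
    have h2 : 2 * (M + 1) = (2 * M + 1) + 1 := by ring
    rw [h2]
    unfold S at *
    rw [Finset.sum_range_succ, Finset.sum_range_succ, ih, Finset.sum_range_succ]
    rw [eps_two_mul, eps_two_mul_add_one]
    have e1 : Complex.exp (2 * Real.pi * Complex.I * α * ((2 * M : ℕ) : ℂ)) =
        Complex.exp (2 * Real.pi * Complex.I * ((2 * α : ℝ) : ℂ) * (M : ℂ)) := by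
      congr 1; push_cast; ring
    have e2 : Complex.exp (2 * Real.pi * Complex.I * α * (((2 * M + 1 : ℕ)) : ℂ)) =
        Complex.exp (2 * Real.pi * Complex.I * ((2 * α : ℝ) : ℂ) * (M : ℂ)) * E α := by
      rw [E, ← Complex.exp_add]; congr 1; push_cast; ring
    push_cast
    push_cast at e1 e2
    rw [e1, e2]
    ring

lemma E_two_mul (α : ℝ) : E (2 * α) = E α ^ 2 := by
  rw [E, E, sq, ← Complex.exp_add]
  congr 1; push_cast; ring

lemma norm_one_sub_E_le_two (α : ℝ) : ‖1 - E α‖ ≤ 2 := by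
  calc ‖1 - E α‖ ≤ ‖(1:ℂ)‖ + ‖E α‖ := norm_sub_le _ _
  _ = 2 := by rw [norm_E]; norm_num

lemma pair_ineq (α : ℝ) : ‖1 - E α‖ ^ 2 * ‖1 - E (2 * α)‖ ≤ 3 * Real.sqrt 3 := by
  set z := E α with hz
  have hz1 : ‖z‖ = 1 := norm_E α
  have hsq : z.re ^ 2 + z.im ^ 2 = 1 := by
    have h := Complex.sq_norm z
    rw [Complex.normSq_apply, hz1] at h
    nlinarith [h]
  set x := z.re with hx
  have hA : ‖1 - z‖ ^ 2 = 2 - 2 * x := by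
    rw [Complex.sq_norm, Complex.normSq_apply]
    simp only [Complex.sub_re, Complex.sub_im, Complex.one_re, Complex.one_im]
    nlinarith [hsq]
  have hB : ‖1 + z‖ ^ 2 = 2 + 2 * x := by
    rw [Complex.sq_norm, Complex.normSq_apply]
    simp only [Complex.add_re, Complex.add_im, Complex.one_re, Complex.one_im]
    nlinarith [hsq]
  have hfac : ‖1 - E (2 * α)‖ = ‖1 - z‖ * ‖1 + z‖ := by
    rw [E_two_mul, ← hz, ← norm_mul]
    congr 1; ring
  rw [hfac]
  have hxle : x ^ 2 ≤ 1 := by nlinarith [sq_nonneg z.im]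
  set A := ‖1 - z‖ with hA'
  set B := ‖1 + z‖ with hB'
  have hAnn : 0 ≤ A := norm_nonneg _
  have hBnn : 0 ≤ B := norm_nonneg _
  have h27 : (A ^ 2 * (A * B)) ^ 2 ≤ 27 := by
    have hexp : (A ^ 2 * (A * B)) ^ 2 = (A ^ 2) ^ 3 * B ^ 2 := by ring
    rw [hexp, hA, hB]
    nlinarith [sq_nonneg ((2*x+1)*(2*x-3)), sq_nonneg (2*x+1)]
  have hs : (3 * Real.sqrt 3) ^ 2 = 27 := by
    rw [mul_pow, Real.sq_sqrt (by norm_num : (3:ℝ) ≥ 0)]; norm_num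
  have h3s : 0 ≤ 3 * Real.sqrt 3 := by positivity
  nlinarith [h27, hs, sq_nonneg (A ^ 2 * (A * B) - 3 * Real.sqrt 3), mul_nonneg (mul_nonneg (sq_nonneg A) (mul_nonneg hAnn hBnn)) h3s]

noncomputable def Q (k : ℕ) (α : ℝ) : ℝ := ∏ i ∈ Finset.range k, ‖1 - E (2 ^ i * α)‖

lemma Q_nonneg (k : ℕ) (α : ℝ) : 0 ≤ Q k α :=
  Finset.prod_nonneg (fun _ _ => norm_nonneg _)

lemma Q_cube (k : ℕ) (α : ℝ) :
    Q (k + 1) α ^ 3 ≤ 2 * (3 * Real.sqrt 3) ^ k * ‖1 - E (2 ^ k * α)‖ ^ 2 := by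
  induction k with
  | zero =>
    show (∏ i ∈ Finset.range 1, ‖1 - E (2 ^ i * α)‖) ^ 3 ≤
      2 * (3 * Real.sqrt 3) ^ 0 * ‖1 - E (2 ^ 0 * α)‖ ^ 2
    rw [Finset.prod_range_one]
    have h0 : ((3:ℝ) * Real.sqrt 3) ^ 0 = 1 := pow_zero _
    rw [h0]
    have h := norm_one_sub_E_le_two ((2:ℝ) ^ 0 * α)
    have hn : (0:ℝ) ≤ ‖1 - E ((2:ℝ) ^ 0 * α)‖ := norm_nonneg _
    nlinarith [sq_nonneg ‖1 - E ((2:ℝ) ^ 0 * α)‖]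
  | succ k ih =>
    have hq : Q (k + 2) α = Q (k + 1) α * ‖1 - E (2 ^ (k+1) * α)‖ := by
      rw [Q, Finset.prod_range_succ]; rfl
    have hpair : ‖1 - E (2 ^ k * α)‖ ^ 2 * ‖1 - E (2 ^ (k+1) * α)‖ ≤ 3 * Real.sqrt 3 := by
      have h := pair_ineq (2 ^ k * α)
      have heq : (2 : ℝ) * (2 ^ k * α) = 2 ^ (k+1) * α := by ring
      rwa [heq] at h
    set a := ‖1 - E (2 ^ k * α)‖ with ha
    set b := ‖1 - E (2 ^ (k+1) * α)‖ with hb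
    have han : 0 ≤ a := norm_nonneg _
    have hbn : 0 ≤ b := norm_nonneg _
    rw [hq, mul_pow]
    calc Q (k + 1) α ^ 3 * b ^ 3
        ≤ (2 * (3 * Real.sqrt 3) ^ k * a ^ 2) * b ^ 3 := by
          apply mul_le_mul_of_nonneg_right ih (by positivity)
      _ = 2 * (3 * Real.sqrt 3) ^ k * ((a ^ 2 * b) * b ^ 2) := by ring
      _ ≤ 2 * (3 * Real.sqrt 3) ^ k * ((3 * Real.sqrt 3) * b ^ 2) := by
          apply mul_le_mul_of_nonneg_left
            (mul_le_mul_of_nonneg_right hpair (by positivity)) (by positivity)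
      _ = 2 * (3 * Real.sqrt 3) ^ (k + 1) * b ^ 2 := by ring

lemma Q_le (k : ℕ) (α : ℝ) : Q k α ≤ 2 * Real.sqrt 3 ^ k := by
  rcases k with _ | j
  · simp [Q]
  · have h := Q_cube j α
    have ha : ‖1 - E (2 ^ j * α)‖ ≤ 2 := norm_one_sub_E_le_two _
    have han : 0 ≤ ‖1 - E (2 ^ j * α)‖ := norm_nonneg _
    have hs : (0:ℝ) ≤ Real.sqrt 3 := Real.sqrt_nonneg 3
    have hs3 : Real.sqrt 3 ^ 2 = 3 := Real.sq_sqrt (by norm_num)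
    have h1 : (1:ℝ) ≤ 3 * Real.sqrt 3 := by nlinarith
    have hcu : Real.sqrt 3 ^ 3 = 3 * Real.sqrt 3 := by
      rw [pow_succ, hs3]
    have hr : (2 * Real.sqrt 3 ^ (j+1)) ^ 3 = 8 * (3 * Real.sqrt 3) ^ (j+1) := by
      rw [mul_pow, ← pow_mul, mul_comm (j+1) 3, pow_mul, hcu]; norm_num
    have hpow : (3 * Real.sqrt 3 : ℝ) ^ j ≤ (3 * Real.sqrt 3) ^ (j+1) :=
      pow_le_pow_right₀ h1 (Nat.le_succ j)
    have hcube : Q (j + 1) α ^ 3 ≤ (2 * Real.sqrt 3 ^ (j + 1)) ^ 3 := by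
      rw [hr]
      have hpn : (0:ℝ) ≤ (3 * Real.sqrt 3) ^ j := by positivity
      have ha2 : ‖1 - E (2 ^ j * α)‖ ^ 2 ≤ 4 := by nlinarith
      calc Q (j + 1) α ^ 3 ≤ 2 * (3 * Real.sqrt 3) ^ j * ‖1 - E (2 ^ j * α)‖ ^ 2 := h
        _ ≤ 2 * (3 * Real.sqrt 3) ^ j * 4 :=
            mul_le_mul_of_nonneg_left ha2 (by positivity)
        _ = 8 * (3 * Real.sqrt 3) ^ j := by ring
        _ ≤ 8 * (3 * Real.sqrt 3) ^ (j + 1) :=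
            mul_le_mul_of_nonneg_left hpow (by norm_num)
    have hQn : 0 ≤ Q (j + 1) α := Q_nonneg _ _
    have h2n : (0:ℝ) ≤ 2 * Real.sqrt 3 ^ (j+1) := by positivity
    exact (pow_le_pow_iff_left₀ hQn h2n (by norm_num)).mp hcube

lemma Q_succ_eq (j : ℕ) (α : ℝ) : Q (j + 1) α = ‖1 - E α‖ * Q j (2 * α) := by
  rw [Q, Finset.prod_range_succ']
  have h1 : ∀ i ∈ Finset.range j, ‖1 - E (2 ^ (i + 1) * α)‖ = ‖1 - E (2 ^ i * (2 * α))‖ := by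
    intro i _; congr 2; ring
  rw [Finset.prod_congr rfl h1]
  have h0 : (2:ℝ) ^ 0 * α = α := by norm_num
  rw [h0, mul_comm]
  rfl

lemma S_le (k : ℕ) : ∀ N, N < 2 ^ k → ∀ α, ‖S N α‖ ≤ ∑ j ∈ Finset.range (k + 1), Q j α := by
  induction k with
  | zero =>
    intro N hN α
    interval_cases N
    simp [S, Q]
  | succ k ih =>
    intro N hN α
    set M := N / 2 with hMdef
    have h2 : 2 ^ (k + 1) = 2 * 2 ^ k := by ring
    have hM : M < 2 ^ k := by omega
    have key : ‖S N α‖ ≤ ‖S (2 * M) α‖ + 1 := by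
      have hcase : N = 2 * M ∨ N = 2 * M + 1 := by omega
      rcases hcase with h | h
      · rw [h]; linarith
      · rw [h]
        have hsucc : S (2 * M + 1) α =
            S (2 * M) α + eps (2 * M) * Complex.exp (2 * Real.pi * Complex.I * α * (2 * M : ℕ)) := by
          rw [S, Finset.sum_range_succ]; rfl
        rw [hsucc]
        calc ‖S (2 * M) α + eps (2 * M) * Complex.exp (2 * Real.pi * Complex.I * α * (2 * M : ℕ))‖
            ≤ ‖S (2 * M) α‖ + ‖eps (2 * M) * Complex.exp (2 * Real.pi * Complex.I * α * (2 * M : ℕ))‖ :=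
              norm_add_le _ _
          _ = ‖S (2 * M) α‖ + 1 := by
              rw [norm_mul, eps_norm, norm_exp_eq_one, one_mul]
    calc ‖S N α‖ ≤ ‖S (2 * M) α‖ + 1 := key
      _ = ‖1 - E α‖ * ‖S M (2 * α)‖ + 1 := by rw [S_two_mul, norm_mul]
      _ ≤ ‖1 - E α‖ * (∑ j ∈ Finset.range (k + 1), Q j (2 * α)) + 1 := by
          have := mul_le_mul_of_nonneg_left (ih M hM (2 * α)) (norm_nonneg (1 - E α))
          linarith
      _ = (∑ j ∈ Finset.range (k + 1), Q (j + 1) α) + Q 0 α := by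
          have hQ0 : Q 0 α = 1 := by simp [Q]
          rw [Finset.mul_sum, hQ0]
          congr 1
          apply Finset.sum_congr rfl
          intro j _
          rw [Q_succ_eq]
      _ = ∑ j ∈ Finset.range (k + 1 + 1), Q j α :=
          (Finset.sum_range_succ' (fun j => Q j α) (k + 1)).symm

lemma geom_le2 (k : ℕ) : ∑ j ∈ Finset.range (k + 1), (2:ℝ) * Real.sqrt 3 ^ j ≤ 6 * Real.sqrt 3 ^ k := by
  have hs : (0:ℝ) ≤ Real.sqrt 3 := Real.sqrt_nonneg 3
  have hs3 : Real.sqrt 3 ^ 2 = 3 := Real.sq_sqrt (by norm_num)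
  have h46 : (0:ℝ) ≤ 4 * Real.sqrt 3 - 6 := by nlinarith
  induction k with
  | zero => norm_num
  | succ k ih =>
    rw [Finset.sum_range_succ, pow_succ]
    nlinarith [mul_nonneg (pow_nonneg hs k) h46, ih]

theorem eps_exp_sum_bound :
    ∃ C > (0 : ℝ), ∀ α X : ℝ, 2 ≤ X →
      ‖∑ n ∈ Finset.Icc 1 ⌊X⌋₊, eps n * Complex.exp (2 * Real.pi * Complex.I * α * n)‖ ≤
        C * X ^ (Real.log 3 / Real.log 4) * Real.log X := by
  have hl2 : (0:ℝ) < Real.log 2 := Real.log_pos (by norm_num)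
  refine ⟨21 / Real.log 2, by positivity, ?_⟩
  intro α X hX2
  have hX0 : (0:ℝ) < X := by linarith
  set m := ⌊X⌋₊ with hm
  have hm2 : 2 ≤ m := Nat.le_floor (by exact_mod_cast hX2)
  have hmX : (m : ℝ) ≤ X := Nat.floor_le (le_of_lt hX0)
  -- rewrite the Icc sum via S
  have hIcc : ∑ n ∈ Finset.Icc 1 m, eps n * Complex.exp (2 * Real.pi * Complex.I * α * n)
      = S (m + 1) α - 1 := by
    have h1 : S (m + 1) α =
        (∑ i ∈ Finset.range m, eps (i + 1) * Complex.exp (2 * Real.pi * Complex.I * α * (i + 1 : ℕ)))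
          + eps 0 * Complex.exp (2 * Real.pi * Complex.I * α * (0 : ℕ)) := by
      rw [S, Finset.sum_range_succ']
    have h0 : eps 0 * Complex.exp (2 * Real.pi * Complex.I * α * (0 : ℕ)) = 1 := by
      simp [eps]
    have h2 : ∑ n ∈ Finset.Icc 1 m, eps n * Complex.exp (2 * Real.pi * Complex.I * α * n)
        = ∑ i ∈ Finset.range m, eps (i + 1) * Complex.exp (2 * Real.pi * Complex.I * α * (i + 1 : ℕ)) := by
      rw [← Finset.Ico_add_one_right_eq_Icc, Finset.sum_Ico_eq_sum_range]
      simp only [Nat.succ_sub_one, Nat.add_sub_cancel]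
      exact Finset.sum_congr rfl fun i _ => by rw [add_comm 1 i]
    rw [h2, h1, h0]
    ring
  rw [hIcc]
  set k := Nat.log 2 m with hk
  have hs : (0:ℝ) ≤ Real.sqrt 3 := Real.sqrt_nonneg 3
  have hs3 : Real.sqrt 3 ^ 2 = 3 := Real.sq_sqrt (by norm_num)
  have h13 : (1:ℝ) ≤ Real.sqrt 3 := by nlinarith
  -- bound on the finite sum
  have hNlt : m + 1 < 2 ^ (k + 2) := by
    have h1 : m < 2 ^ (k + 1) := Nat.lt_pow_succ_log_self (by norm_num) m
    have h2 : 2 ^ (k + 2) = 2 * 2 ^ (k + 1) := by ring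
    omega
  have hS : ‖S (m + 1) α‖ ≤ 6 * Real.sqrt 3 ^ (k + 2) := by
    calc ‖S (m + 1) α‖ ≤ ∑ j ∈ Finset.range (k + 2 + 1), Q j α := S_le (k + 2) (m + 1) hNlt α
      _ ≤ ∑ j ∈ Finset.range (k + 2 + 1), (2:ℝ) * Real.sqrt 3 ^ j :=
          Finset.sum_le_sum fun j _ => Q_le j α
      _ ≤ 6 * Real.sqrt 3 ^ (k + 2) := geom_le2 (k + 2)
  have hpowk : (1:ℝ) ≤ Real.sqrt 3 ^ (k + 2) := one_le_pow₀ h13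
  have htot : ‖S (m + 1) α - 1‖ ≤ 21 * Real.sqrt 3 ^ k := by
    have h1 : ‖S (m + 1) α - 1‖ ≤ ‖S (m + 1) α‖ + 1 := by
      calc ‖S (m + 1) α - 1‖ ≤ ‖S (m + 1) α‖ + ‖(1:ℂ)‖ := norm_sub_le _ _
        _ = ‖S (m + 1) α‖ + 1 := by rw [norm_one]
    have h2 : Real.sqrt 3 ^ (k + 2) = 3 * Real.sqrt 3 ^ k := by
      rw [pow_add, hs3]; ring
    have h3 : ‖S (m + 1) α - 1‖ ≤ 7 * Real.sqrt 3 ^ (k + 2) := by linarith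
    rw [h2] at h3; linarith
  -- compare sqrt3^k with X^(log 3/log 4)
  have hlam : Real.sqrt 3 ^ k ≤ X ^ (Real.log 3 / Real.log 4) := by
    have hpk : ((2:ℝ)) ^ (k:ℝ) ≤ X := by
      have h1 : (2:ℕ) ^ k ≤ m := Nat.pow_log_le_self 2 (by omega)
      have h2 : ((2:ℕ) ^ k : ℝ) ≤ (m:ℝ) := by exact_mod_cast h1
      rw [Real.rpow_natCast]
      push_cast at h2
      linarith
    have hklog : (k : ℝ) ≤ Real.logb 2 X := by
      rw [Real.le_logb_iff_rpow_le (by norm_num) hX0]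
      exact hpk
    have hmono : Real.sqrt 3 ^ (k:ℝ) ≤ Real.sqrt 3 ^ (Real.logb 2 X) :=
      Real.rpow_le_rpow_of_exponent_le h13 hklog
    have heq : Real.sqrt 3 ^ (Real.logb 2 X) = X ^ (Real.log 3 / Real.log 4) := by
      rw [Real.rpow_def_of_pos (by positivity : (0:ℝ) < Real.sqrt 3),
        Real.rpow_def_of_pos hX0]
      congr 1
      rw [Real.log_sqrt (by norm_num), Real.logb]
      have h4 : Real.log 4 = 2 * Real.log 2 := by
        have h42 : (4:ℝ) = 2 ^ 2 := by norm_num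
        rw [h42, Real.log_pow]; push_cast; ring
      rw [h4]
      field_simp
    rw [← Real.rpow_natCast (Real.sqrt 3) k]
    rw [heq] at hmono
    exact hmono
  have hXlam : (0:ℝ) ≤ X ^ (Real.log 3 / Real.log 4) := Real.rpow_nonneg (le_of_lt hX0) _
  have hlogX : Real.log 2 ≤ Real.log X := Real.log_le_log (by norm_num) hX2
  calc ‖S (m + 1) α - 1‖ ≤ 21 * Real.sqrt 3 ^ k := htot
    _ ≤ 21 * X ^ (Real.log 3 / Real.log 4) := by nlinarith
    _ = 21 / Real.log 2 * X ^ (Real.log 3 / Real.log 4) * Real.log 2 := by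
        field_simp
    _ ≤ 21 / Real.log 2 * X ^ (Real.log 3 / Real.log 4) * Real.log X := by
        apply mul_le_mul_of_nonneg_left hlogX (by positivity)
end

section
/- For every positive integer Q, ∫_0^1 |∏_{r=0}^{2Q−1} (1 − e^{2πiα·2^r})| dα ≤ 2^{Qθ₀}, where θ₀ = log₂ √(2 + √2). -/
open Real

noncomputable def ff (t : ℝ) : ℝ := ‖1 - Complex.exp (2 * Real.pi * Complex.I * t)‖

lemma ff_eq (t : ℝ) : ff t = 2 * |Real.sin (Real.pi * t)| := by
  unfold ff
  rw [show (2 * (Real.pi:ℂ) * Complex.I * t) = ((2*Real.pi*t : ℝ) : ℂ) * Complex.I by push_cast; ring]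
  rw [Complex.norm_def, Complex.normSq_apply]
  simp only [Complex.sub_re, Complex.sub_im, Complex.one_re, Complex.one_im,
    Complex.exp_ofReal_mul_I_re, Complex.exp_ofReal_mul_I_im]
  have h2 : (1 - Real.cos (2*Real.pi*t)) * (1 - Real.cos (2*Real.pi*t)) +
      (0 - Real.sin (2*Real.pi*t)) * (0 - Real.sin (2*Real.pi*t)) = (2 * |Real.sin (Real.pi*t)|)^2 := by
    have hc : Real.cos (2*Real.pi*t) = 1 - 2 * Real.sin (Real.pi*t)^2 := by
      rw [show 2*Real.pi*t = 2*(Real.pi*t) by ring, Real.cos_two_mul']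
      linarith [Real.sin_sq_add_cos_sq (Real.pi*t)]
    have hs := Real.sin_sq_add_cos_sq (2*Real.pi*t)
    have habs : |Real.sin (Real.pi*t)|^2 = Real.sin (Real.pi*t)^2 := sq_abs _
    nlinarith [hs, hc]
  rw [h2, Real.sqrt_sq (by positivity)]

lemma ff_cont : Continuous ff := by
  unfold ff
  fun_prop

lemma ff_nonneg (t : ℝ) : 0 ≤ ff t := norm_nonneg _

lemma ff_add_nat (t : ℝ) (m : ℕ) : ff (t + m) = ff t := by
  rw [ff_eq, ff_eq]
  congr 1
  rw [mul_add]
  rw [abs_eq_abs]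
  rcases Nat.even_or_odd m with ⟨j, hj⟩ | ⟨j, hj⟩
  · left
    rw [hj, show Real.pi * t + Real.pi * ↑(j + j) = Real.pi * t + (j:ℤ) * (2*Real.pi) by push_cast; ring]
    exact Real.sin_add_int_mul_two_pi _ _
  · right
    rw [hj, show Real.pi * t + Real.pi * ↑(2*j+1) = (Real.pi * t + Real.pi) + (j:ℤ) * (2*Real.pi) by push_cast; ring]
    rw [Real.sin_add_int_mul_two_pi, Real.sin_add_pi]

lemma sqrt2_facts : (1:ℝ) ≤ Real.sqrt 2 ∧ Real.sqrt 2 ≤ 2 := by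
  constructor <;> nlinarith [Real.sq_sqrt (by norm_num : (0:ℝ) ≤ 2), Real.sqrt_nonneg 2]

lemma sqrt_sub_eq : Real.sqrt (2 - Real.sqrt 2) = (Real.sqrt 2 - 1) * Real.sqrt (2 + Real.sqrt 2) := by
  obtain ⟨h1, h2⟩ := sqrt2_facts
  have hk2 : Real.sqrt 2 ^ 2 = 2 := Real.sq_sqrt (by norm_num)
  have h : ((Real.sqrt 2 - 1) * Real.sqrt (2 + Real.sqrt 2))^2 = 2 - Real.sqrt 2 := by
    rw [mul_pow, Real.sq_sqrt (by positivity)]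
    linear_combination Real.sqrt 2 * hk2
  rw [← h, Real.sqrt_sq (by nlinarith [Real.sqrt_nonneg (2 + Real.sqrt 2)])]

lemma keyE (a : ℝ) :
    2 * Real.sin a * Real.cos a * (Real.sin a + Real.cos a)
      + Real.sqrt 2 * Real.cos a * ((Real.cos a)^2 - (Real.sin a)^2)
    ≤ Real.sqrt (2 + Real.sqrt 2) := by
  obtain ⟨h1, h2⟩ := sqrt2_facts
  set s := Real.sin a with hs
  set c := Real.cos a with hc
  set k := Real.sqrt 2 with hkdef
  set u := Real.sin (Real.pi/8) with hudef
  set v := Real.cos (Real.pi/8) with hvdef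
  have hu : u = Real.sqrt (2 - k) / 2 := Real.sin_pi_div_eight
  have hv : v = Real.sqrt (2 + k) / 2 := Real.cos_pi_div_eight
  have hk2 : k ^ 2 = 2 := Real.sq_sqrt (by norm_num)
  have hv2 : v ^ 2 = (2 + k) / 4 := by
    rw [hv, div_pow, Real.sq_sqrt (by positivity)]; norm_num
  have hu2 : u ^ 2 = (2 - k) / 4 := by
    rw [hu, div_pow, Real.sq_sqrt (by linarith)]; norm_num
  have huv : u * v = k / 4 := by
    rw [hu, hv, sqrt_sub_eq, ← hkdef]
    have : Real.sqrt (2+k) * Real.sqrt (2+k) = 2 + k := Real.mul_self_sqrt (by positivity)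
    field_simp
    nlinarith [this, hk2]
  have hsc : s^2 + c^2 = 1 := Real.sin_sq_add_cos_sq a
  have hE : 2*s*c*(s+c) + k*c*(c^2 - s^2)
      = k * (v * Real.cos (a - Real.pi/8) + u * Real.sin (3*a + Real.pi/8)) := by
    rw [Real.cos_sub, Real.sin_add, Real.sin_three_mul, Real.cos_three_mul, ← hs, ← hc, ← hudef, ← hvdef]
    linear_combination (2*s + 2*c - k*c) * hsc - (s - s^3 - c^3 + c) * hk2
      - (k*c) * hv2 - (4*k*s - 4*k*s^3) * huv - (4*k*c^3 - 3*k*c) * hu2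
  have hsum : k * (v + u) = Real.sqrt (2 + k) := by
    rw [hu, hv, sqrt_sub_eq, ← hkdef]
    field_simp
    linear_combination hk2
  have hub : 0 ≤ u := by rw [hu]; positivity
  have hvb : 0 ≤ v := by rw [hv]; positivity
  have hcos1 : Real.cos (a - Real.pi/8) ≤ 1 := Real.cos_le_one _
  have hsin1 : Real.sin (3*a + Real.pi/8) ≤ 1 := Real.sin_le_one _
  calc 2*s*c*(s+c) + k*c*(c^2 - s^2)
      = k * (v * Real.cos (a - Real.pi/8) + u * Real.sin (3*a + Real.pi/8)) := hE
    _ ≤ k * (v + u) := by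
        apply mul_le_mul_of_nonneg_left _ (by positivity)
        have := mul_le_mul_of_nonneg_left hcos1 hvb
        have := mul_le_mul_of_nonneg_left hsin1 hub
        linarith
    _ = Real.sqrt (2 + k) := hsum

lemma sum_bound (β : ℝ) (hb0 : 0 ≤ β) (hb1 : β ≤ 1) :
    ff (β/4) * ff (β/2) + ff ((β+1)/4) * ff ((β+1)/2)
      + ff ((β+2)/4) * ff ((β+2)/2) + ff ((β+3)/4) * ff ((β+3)/2)
    ≤ 4 * Real.sqrt (2 + Real.sqrt 2) := by
  have hpi := Real.pi_pos
  set a := Real.pi * β / 4 with hadef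
  have ha0 : 0 ≤ a := by rw [hadef]; positivity
  have ha1 : a ≤ Real.pi / 4 := by rw [hadef]; nlinarith
  rw [ff_eq, ff_eq, ff_eq, ff_eq, ff_eq, ff_eq, ff_eq, ff_eq]
  rw [show Real.pi * (β/4) = a by rw [hadef]; ring]
  rw [show Real.pi * (β/2) = 2*a by rw [hadef]; ring]
  rw [show Real.pi * ((β+1)/4) = a + Real.pi/4 by rw [hadef]; ring]
  rw [show Real.pi * ((β+1)/2) = 2*a + Real.pi/2 by rw [hadef]; ring]
  rw [show Real.pi * ((β+2)/4) = a + Real.pi/2 by rw [hadef]; ring]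
  rw [show Real.pi * ((β+2)/2) = 2*a + Real.pi by rw [hadef]; ring]
  rw [show Real.pi * ((β+3)/4) = (a + Real.pi/4) + Real.pi/2 by rw [hadef]; ring]
  rw [show Real.pi * ((β+3)/2) = (2*a + Real.pi/2) + Real.pi by rw [hadef]; ring]
  rw [Real.sin_add_pi_div_two, Real.sin_add_pi_div_two, Real.sin_add_pi, Real.sin_add_pi,
    Real.sin_add_pi_div_two]
  rw [abs_neg, abs_neg]
  rw [Real.sin_add_pi_div_two]
  have h1 : |Real.sin a| = Real.sin a :=
    abs_of_nonneg (Real.sin_nonneg_of_nonneg_of_le_pi ha0 (by linarith))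
  have h2 : |Real.sin (2*a)| = Real.sin (2*a) :=
    abs_of_nonneg (Real.sin_nonneg_of_nonneg_of_le_pi (by linarith) (by linarith))
  have h3 : |Real.sin (a + Real.pi/4)| = Real.sin (a + Real.pi/4) :=
    abs_of_nonneg (Real.sin_nonneg_of_nonneg_of_le_pi (by linarith) (by linarith))
  have h4 : |Real.cos (2*a)| = Real.cos (2*a) :=
    abs_of_nonneg (Real.cos_nonneg_of_mem_Icc ⟨by linarith, by linarith⟩)
  have h5 : |Real.cos a| = Real.cos a :=
    abs_of_nonneg (Real.cos_nonneg_of_mem_Icc ⟨by linarith, by linarith⟩)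
  have h6 : |Real.cos (a + Real.pi/4)| = Real.cos (a + Real.pi/4) :=
    abs_of_nonneg (Real.cos_nonneg_of_mem_Icc ⟨by linarith, by linarith⟩)
  rw [h1, h2, h3, h4, h5, h6]
  have hE := keyE a
  rw [Real.sin_add, Real.cos_add, Real.sin_pi_div_four, Real.cos_pi_div_four] at *
  rw [Real.sin_two_mul, Real.cos_two_mul'] at *
  nlinarith [hE]

noncomputable def PP (n : ℕ) (α : ℝ) : ℝ := ∏ r ∈ Finset.range n, ff (2^r * α)

lemma PP_cont (n : ℕ) : Continuous (PP n) := by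
  unfold PP
  exact continuous_finset_prod _ (fun r _ => ff_cont.comp (continuous_const.mul continuous_id))

lemma PP_nonneg (n : ℕ) (α : ℝ) : 0 ≤ PP n α :=
  Finset.prod_nonneg fun r _ => ff_nonneg _

lemma PP_add_nat (n k : ℕ) (x : ℝ) : PP n (x + k) = PP n x := by
  unfold PP
  apply Finset.prod_congr rfl
  intro r _
  rw [mul_add, show (2:ℝ)^r * (k:ℝ) = ((2^r * k : ℕ) : ℝ) by push_cast; ring, ff_add_nat]

lemma PP_peel (n : ℕ) (α : ℝ) : PP (2*n+2) α = ff α * ff (2*α) * PP (2*n) (4*α) := by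
  unfold PP
  rw [Finset.prod_range_succ', Finset.prod_range_succ']
  have h : ∀ r : ℕ, (2:ℝ)^(r+1+1) * α = 2^r * (4*α) := by
    intro r; rw [pow_succ, pow_succ]; ring
  simp only [h, zero_add, pow_zero, pow_one, one_mul]
  ac_rfl

lemma step_integral (n : ℕ) :
    (∫ α in (0:ℝ)..1, PP (2*n+2) α)
      ≤ Real.sqrt (2 + Real.sqrt 2) * ∫ α in (0:ℝ)..1, PP (2*n) α := by
  have hH : Continuous (fun y : ℝ => ff (y/4) * ff (y/2) * PP (2*n) y) := by
    exact ((ff_cont.comp (continuous_id.div_const 4)).mul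
      (ff_cont.comp (continuous_id.div_const 2))).mul (PP_cont _)
  have hG : Continuous (fun α : ℝ => (fun y : ℝ => ff (y/4) * ff (y/2) * PP (2*n) y) (4*α)) :=
    hH.comp (continuous_const.mul continuous_id)
  -- rewrite the integrand
  have h1 : (∫ α in (0:ℝ)..1, PP (2*n+2) α)
      = ∫ α in (0:ℝ)..1, (fun y : ℝ => ff (y/4) * ff (y/2) * PP (2*n) y) (4*α) := by
    apply intervalIntegral.integral_congr
    intro x _
    simp only
    rw [PP_peel, show 4*x/4 = x by ring, show 4*x/2 = 2*x by ring]
  -- split into four pieces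
  have h2 : (∫ α in (0:ℝ)..1, (fun y : ℝ => ff (y/4) * ff (y/2) * PP (2*n) y) (4*α))
      = ∑ k ∈ Finset.range 4, ∫ α in ((k:ℝ)/4)..(((k:ℝ)+1)/4),
          (fun y : ℝ => ff (y/4) * ff (y/2) * PP (2*n) y) (4*α) := by
    have := intervalIntegral.sum_integral_adjacent_intervals
      (a := fun k : ℕ => (k:ℝ)/4) (μ := MeasureTheory.volume)
      (f := fun α => (fun y : ℝ => ff (y/4) * ff (y/2) * PP (2*n) y) (4*α)) (n := 4)
      (fun k _ => hG.intervalIntegrable _ _)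
    simp only [Nat.cast_ofNat, Nat.cast_zero, Nat.cast_succ] at this ⊢
    rw [this]
    norm_num
  -- evaluate each piece
  have h3 : ∀ k : ℕ, (∫ α in ((k:ℝ)/4)..(((k:ℝ)+1)/4),
        (fun y : ℝ => ff (y/4) * ff (y/2) * PP (2*n) y) (4*α))
      = (4:ℝ)⁻¹ * ∫ x in (0:ℝ)..1, ff ((x+(k:ℝ))/4) * ff ((x+(k:ℝ))/2) * PP (2*n) x := by
    intro k
    rw [intervalIntegral.integral_comp_mul_left
      (fun y : ℝ => ff (y/4) * ff (y/2) * PP (2*n) y) (by norm_num : (4:ℝ) ≠ 0)]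
    rw [show (4:ℝ) * ((k:ℝ)/4) = (k:ℝ) by ring, show (4:ℝ) * (((k:ℝ)+1)/4) = (k:ℝ)+1 by ring]
    rw [smul_eq_mul]
    congr 1
    have := intervalIntegral.integral_comp_add_right
      (a := (0:ℝ)) (b := (1:ℝ)) (fun y : ℝ => ff (y/4) * ff (y/2) * PP (2*n) y) (k:ℝ)
    rw [zero_add, add_comm (1:ℝ) (k:ℝ)] at this
    rw [← this]
    apply intervalIntegral.integral_congr
    intro x _
    simp only
    rw [PP_add_nat]
  rw [h1, h2, Finset.sum_congr rfl (fun k _ => h3 k), ← Finset.mul_sum]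
  have h4 : ∑ k ∈ Finset.range 4, ∫ x in (0:ℝ)..1,
        ff ((x+(k:ℝ))/4) * ff ((x+(k:ℝ))/2) * PP (2*n) x
      = ∫ x in (0:ℝ)..1, ∑ k ∈ Finset.range 4,
          ff ((x+(k:ℝ))/4) * ff ((x+(k:ℝ))/2) * PP (2*n) x := by
    rw [intervalIntegral.integral_finset_sum]
    intro k _
    exact (((ff_cont.comp (by continuity)).mul (ff_cont.comp (by continuity))).mul
      (PP_cont _)).intervalIntegrable _ _
  rw [h4]
  have h5 : (∫ x in (0:ℝ)..1, ∑ k ∈ Finset.range 4,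
        ff ((x+(k:ℝ))/4) * ff ((x+(k:ℝ))/2) * PP (2*n) x)
      ≤ ∫ x in (0:ℝ)..1, (4 * Real.sqrt (2+Real.sqrt 2)) * PP (2*n) x := by
    apply intervalIntegral.integral_mono_on (by norm_num)
    · exact (continuous_finset_sum _ (fun k _ =>
        ((ff_cont.comp (by continuity)).mul (ff_cont.comp (by continuity))).mul
          (PP_cont _))).intervalIntegrable _ _
    · exact (continuous_const.mul (PP_cont _)).intervalIntegrable _ _
    · intro x hx
      have hs := sum_bound x hx.1 hx.2
      have hp := PP_nonneg (2*n) x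
      rw [show (∑ k ∈ Finset.range 4, ff ((x+(k:ℝ))/4) * ff ((x+(k:ℝ))/2) * PP (2*n) x)
          = (∑ k ∈ Finset.range 4, ff ((x+(k:ℝ))/4) * ff ((x+(k:ℝ))/2)) * PP (2*n) x from
        (Finset.sum_mul _ _ _).symm]
      have hsum : (∑ k ∈ Finset.range 4, ff ((x+(k:ℝ))/4) * ff ((x+(k:ℝ))/2))
          ≤ 4 * Real.sqrt (2+Real.sqrt 2) := by
        rw [Finset.sum_range_succ, Finset.sum_range_succ, Finset.sum_range_succ,
          Finset.sum_range_one]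
        push_cast
        norm_num
        linarith [hs]
      exact mul_le_mul_of_nonneg_right hsum hp
  have h6 : (∫ x in (0:ℝ)..1, (4 * Real.sqrt (2+Real.sqrt 2)) * PP (2*n) x)
      = (4 * Real.sqrt (2+Real.sqrt 2)) * ∫ x in (0:ℝ)..1, PP (2*n) x :=
    intervalIntegral.integral_const_mul _ _
  calc (4:ℝ)⁻¹ * ∫ x in (0:ℝ)..1, ∑ k ∈ Finset.range 4,
        ff ((x+(k:ℝ))/4) * ff ((x+(k:ℝ))/2) * PP (2*n) x
      ≤ (4:ℝ)⁻¹ * ((4 * Real.sqrt (2+Real.sqrt 2)) * ∫ x in (0:ℝ)..1, PP (2*n) x) := by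
        rw [← h6]; exact mul_le_mul_of_nonneg_left h5 (by norm_num)
    _ = Real.sqrt (2+Real.sqrt 2) * ∫ x in (0:ℝ)..1, PP (2*n) x := by ring

lemma PP_int_bound (n : ℕ) :
    (∫ α in (0:ℝ)..1, PP (2*n) α) ≤ Real.sqrt (2 + Real.sqrt 2) ^ n := by
  induction n with
  | zero => simp [PP]
  | succ m ih =>
    have hc : 0 ≤ Real.sqrt (2 + Real.sqrt 2) := Real.sqrt_nonneg _
    calc (∫ α in (0:ℝ)..1, PP (2*(m+1)) α)
        = ∫ α in (0:ℝ)..1, PP (2*m+2) α := by rw [show 2*(m+1) = 2*m+2 by ring]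
      _ ≤ Real.sqrt (2 + Real.sqrt 2) * ∫ α in (0:ℝ)..1, PP (2*m) α := step_integral m
      _ ≤ Real.sqrt (2 + Real.sqrt 2) * Real.sqrt (2 + Real.sqrt 2) ^ m :=
          mul_le_mul_of_nonneg_left ih hc
      _ = Real.sqrt (2 + Real.sqrt 2) ^ (m+1) := by ring

theorem integral_product_bound (Q : ℕ) (hQ : 1 ≤ Q) :
    (∫ α in (0:ℝ)..1,
        ‖∏ r ∈ Finset.range (2 * Q),
            (1 - Complex.exp (2 * Real.pi * Complex.I * α * 2 ^ r))‖) ≤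
      (2 : ℝ) ^ ((Q : ℝ) * Real.logb 2 (Real.sqrt (2 + Real.sqrt 2))) := by
  have hnorm : ∀ α : ℝ, ‖∏ r ∈ Finset.range (2 * Q),
      (1 - Complex.exp (2 * Real.pi * Complex.I * α * 2 ^ r))‖ = PP (2*Q) α := by
    intro α
    rw [norm_prod]
    unfold PP
    apply Finset.prod_congr rfl
    intro r _
    unfold ff
    congr 2
    push_cast
    ring
  rw [intervalIntegral.integral_congr (fun x _ => hnorm x)]
  have hc : (0:ℝ) < Real.sqrt (2 + Real.sqrt 2) :=
    Real.sqrt_pos.mpr (by positivity)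
  have hR : (2 : ℝ) ^ ((Q : ℝ) * Real.logb 2 (Real.sqrt (2 + Real.sqrt 2)))
      = Real.sqrt (2 + Real.sqrt 2) ^ Q := by
    rw [mul_comm, Real.rpow_mul (by norm_num : (0:ℝ) ≤ 2),
      Real.rpow_logb (by norm_num) (by norm_num) hc, Real.rpow_natCast]
  rw [hR]
  exact PP_int_bound Q
end

section
/- There is an absolute constant C > 0 such that for every positive integer k, 2^{−k} · ∑_{r=0}^{2^k−1} |∑_{x=0}^{2^k−1} ε(x) e^{2πi r x / 2^k}| ≤ C · k · 2^{θ₀ k / 2}, where θ₀ = log₂ √(2 + √2). -/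
lemma dsum_rec (x : ℕ) : (Nat.digits 2 x).sum = x % 2 + (Nat.digits 2 (x / 2)).sum := by
  rcases Nat.eq_zero_or_pos x with h | h
  · simp [h]
  · rw [Nat.digits_def' (by norm_num : 1 < 2) h]; simp

lemma dsum_pow_add (k : ℕ) : ∀ x, x < 2 ^ k →
    (Nat.digits 2 (2 ^ k + x)).sum = (Nat.digits 2 x).sum + 1 := by
  induction k with
  | zero =>
      intro x hx
      interval_cases x
      · simp [Nat.digits_def']
  | succ k ih =>
      intro x hx
      rw [dsum_rec (2 ^ (k+1) + x), dsum_rec x]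
      have h1 : (2 ^ (k+1) + x) % 2 = x % 2 := by
        have : 2 ^ (k+1) = 2 * 2 ^ k := by ring
        omega
      have h2 : (2 ^ (k+1) + x) / 2 = 2 ^ k + x / 2 := by
        have : 2 ^ (k+1) = 2 * 2 ^ k := by ring
        omega
      have h3 : x / 2 < 2 ^ k := by
        have : 2 ^ (k+1) = 2 * 2 ^ k := by ring
        omega
      rw [h1, h2, ih _ h3]
      ring

lemma eps_pow_add (k x : ℕ) (hx : x < 2 ^ k) : eps (2 ^ k + x) = - eps x := by
  unfold eps
  rw [dsum_pow_add k x hx]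
  rcases Nat.even_or_odd ((Nat.digits 2 x).sum) with h | h
  · simp [h, Nat.even_add_one, Nat.not_even_iff_odd, h.add_one]
  · simp [Nat.not_even_iff_odd.2 h, Nat.even_add_one, Nat.not_even_iff_odd]

lemma eps_sum_eq_prod (k : ℕ) (z : ℂ) :
    ∑ x ∈ Finset.range (2 ^ k), eps x * z ^ x
      = ∏ j ∈ Finset.range k, (1 - z ^ (2 ^ j)) := by
  induction k with
  | zero => simp [eps]
  | succ k ih =>
      have h2 : (2:ℕ) ^ (k+1) = 2 ^ k + 2 ^ k := by ring
      rw [h2, Finset.sum_range_add, Finset.prod_range_succ, ← ih]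
      have : ∑ x ∈ Finset.range (2 ^ k), eps (2 ^ k + x) * z ^ (2 ^ k + x)
          = - (z ^ (2 ^ k) * ∑ x ∈ Finset.range (2 ^ k), eps x * z ^ x) := by
        rw [Finset.mul_sum, ← Finset.sum_neg_distrib]
        refine Finset.sum_congr rfl fun x hx => ?_
        rw [eps_pow_add k x (Finset.mem_range.1 hx), pow_add]
        ring
      rw [this]
      ring


noncomputable def gg (x : ℝ) : ℝ := 2 * |Real.sin (Real.pi * x)|

noncomputable def ph (x : ℝ) : ℝ := 73/10 + gg x

lemma gg_nonneg (x : ℝ) : 0 ≤ gg x := by unfold gg; positivity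

lemma ph_ge (x : ℝ) : 73/10 ≤ ph x := by
  have := gg_nonneg x; unfold ph; linarith

lemma ph_pos (x : ℝ) : 0 < ph x := lt_of_lt_of_le (by norm_num) (ph_ge x)

lemma gg_add_nat (x : ℝ) (n : ℕ) : gg (x + n) = gg x := by
  unfold gg
  rw [mul_add, mul_comm Real.pi (n:ℝ), Real.sin_add_nat_mul_pi]
  rw [abs_mul, abs_pow, abs_neg, abs_one, one_pow, one_mul]

lemma key_ineq (v : ℝ) :
    ph (v/2) * gg (v/2) + ph ((v+1)/2) * gg ((v+1)/2) ≤ (27/10) * ph v := by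
  have hs : Real.sin (Real.pi * v) = 2 * Real.sin (Real.pi * (v/2)) * Real.cos (Real.pi * (v/2)) := by
    rw [← Real.sin_two_mul]; ring_nf
  have hc : Real.sin (Real.pi * ((v+1)/2)) = Real.cos (Real.pi * (v/2)) := by
    rw [show Real.pi * ((v+1)/2) = Real.pi * (v/2) + Real.pi/2 by ring,
      Real.sin_add_pi_div_two]
  set s := |Real.sin (Real.pi * (v/2))| with hsdef
  set c := |Real.cos (Real.pi * (v/2))| with hcdef
  have hsc : s^2 + c^2 = 1 := by
    rw [hsdef, hcdef, sq_abs, sq_abs]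
    exact Real.sin_sq_add_cos_sq _
  have hs0 : 0 ≤ s := abs_nonneg _
  have hc0 : 0 ≤ c := abs_nonneg _
  have e1 : gg (v/2) = 2 * s := rfl
  have e2 : gg ((v+1)/2) = 2 * c := by unfold gg; rw [hc]
  have e3 : gg v = 4 * (s * c) := by
    unfold gg; rw [hs, hsdef, hcdef]
    rw [abs_mul, abs_mul]
    simp [abs_of_nonneg]
    ring
  unfold ph
  rw [e1, e2, e3]
  nlinarith [sq_nonneg (s + c - 73/54), sq_nonneg (s - c), sq_nonneg (s + c)]

lemma transfer (k : ℕ) (t : ℝ) :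
    ∑ r ∈ Finset.range (2 ^ k),
        ph ((t + r) / (2:ℝ) ^ k) *
          ∏ j ∈ Finset.range k, gg ((2:ℝ) ^ j * ((t + r) / (2:ℝ) ^ k))
      ≤ (27/10) ^ k * ph t := by
  induction k generalizing t with
  | zero => simp
  | succ k ih =>
    rw [show (2:ℕ) ^ (k+1) = 2 ^ k + 2 ^ k from by ring, Finset.sum_range_add]
    have key : ∀ r ∈ Finset.range (2 ^ k),
        ph ((t + r) / (2:ℝ) ^ (k+1)) *
            ∏ j ∈ Finset.range (k+1), gg ((2:ℝ) ^ j * ((t + r) / (2:ℝ) ^ (k+1)))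
          + ph ((t + ↑(2 ^ k + r)) / (2:ℝ) ^ (k+1)) *
            ∏ j ∈ Finset.range (k+1), gg ((2:ℝ) ^ j * ((t + ↑(2 ^ k + r)) / (2:ℝ) ^ (k+1)))
        ≤ (27/10) * (ph ((t + r) / (2:ℝ) ^ k) *
            ∏ j ∈ Finset.range k, gg ((2:ℝ) ^ j * ((t + r) / (2:ℝ) ^ k))) := by
      intro r _
      set v : ℝ := (t + r) / (2:ℝ) ^ k with hv
      have hv0 : (t + (r:ℝ)) / (2:ℝ) ^ (k+1) = v / 2 := by
        rw [hv, pow_succ]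
        field_simp
      have hv1 : (t + ((2 ^ k + r : ℕ) : ℝ)) / (2:ℝ) ^ (k+1) = (v + 1) / 2 := by
        rw [hv, pow_succ]
        have h2k : (0:ℝ) < (2:ℝ) ^ k := by positivity
        push_cast
        field_simp
        ring
      have p0 : ∏ j ∈ Finset.range (k+1), gg ((2:ℝ) ^ j * (v / 2))
          = gg (v / 2) * ∏ j ∈ Finset.range k, gg ((2:ℝ) ^ j * v) := by
        rw [Finset.prod_range_succ']
        rw [mul_comm]
        congr 1
        · simp
        · refine Finset.prod_congr rfl fun j _ => ?_
          congr 1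
          rw [pow_succ]
          ring
      have p1 : ∏ j ∈ Finset.range (k+1), gg ((2:ℝ) ^ j * ((v + 1) / 2))
          = gg ((v + 1) / 2) * ∏ j ∈ Finset.range k, gg ((2:ℝ) ^ j * v) := by
        rw [Finset.prod_range_succ']
        rw [mul_comm]
        congr 1
        · simp
        · refine Finset.prod_congr rfl fun j _ => ?_
          have h : (2:ℝ) ^ (j+1) * ((v + 1) / 2) = (2:ℝ) ^ j * v + ((2 ^ j : ℕ) : ℝ) := by
            push_cast
            ring
          rw [h, gg_add_nat]
      rw [hv0, hv1, p0, p1]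
      have hP : 0 ≤ ∏ j ∈ Finset.range k, gg ((2:ℝ) ^ j * v) :=
        Finset.prod_nonneg fun _ _ => gg_nonneg _
      calc ph (v / 2) * (gg (v / 2) * ∏ j ∈ Finset.range k, gg ((2:ℝ) ^ j * v))
            + ph ((v + 1) / 2) * (gg ((v + 1) / 2) * ∏ j ∈ Finset.range k, gg ((2:ℝ) ^ j * v))
          = (ph (v / 2) * gg (v / 2) + ph ((v + 1) / 2) * gg ((v + 1) / 2)) *
              ∏ j ∈ Finset.range k, gg ((2:ℝ) ^ j * v) := by ring
        _ ≤ (27/10 * ph v) * ∏ j ∈ Finset.range k, gg ((2:ℝ) ^ j * v) :=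
            mul_le_mul_of_nonneg_right (key_ineq v) hP
        _ = 27/10 * (ph v * ∏ j ∈ Finset.range k, gg ((2:ℝ) ^ j * v)) := by ring
    calc (∑ r ∈ Finset.range (2 ^ k),
            ph ((t + r) / (2:ℝ) ^ (k+1)) *
              ∏ j ∈ Finset.range (k+1), gg ((2:ℝ) ^ j * ((t + r) / (2:ℝ) ^ (k+1))))
          + ∑ r ∈ Finset.range (2 ^ k),
            ph ((t + ↑(2 ^ k + r)) / (2:ℝ) ^ (k+1)) *
              ∏ j ∈ Finset.range (k+1), gg ((2:ℝ) ^ j * ((t + ↑(2 ^ k + r)) / (2:ℝ) ^ (k+1)))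
        = ∑ r ∈ Finset.range (2 ^ k),
            (ph ((t + r) / (2:ℝ) ^ (k+1)) *
              ∏ j ∈ Finset.range (k+1), gg ((2:ℝ) ^ j * ((t + r) / (2:ℝ) ^ (k+1)))
            + ph ((t + ↑(2 ^ k + r)) / (2:ℝ) ^ (k+1)) *
              ∏ j ∈ Finset.range (k+1), gg ((2:ℝ) ^ j * ((t + ↑(2 ^ k + r)) / (2:ℝ) ^ (k+1)))) :=
          (Finset.sum_add_distrib).symm
      _ ≤ ∑ r ∈ Finset.range (2 ^ k),
            (27/10) * (ph ((t + r) / (2:ℝ) ^ k) *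
              ∏ j ∈ Finset.range k, gg ((2:ℝ) ^ j * ((t + r) / (2:ℝ) ^ k))) :=
          Finset.sum_le_sum key
      _ = (27/10) * ∑ r ∈ Finset.range (2 ^ k),
            ph ((t + r) / (2:ℝ) ^ k) *
              ∏ j ∈ Finset.range k, gg ((2:ℝ) ^ j * ((t + r) / (2:ℝ) ^ k)) :=
          (Finset.mul_sum _ _ _).symm
      _ ≤ (27/10) * ((27/10) ^ k * ph t) := by
          have := ih t
          nlinarith [this]
      _ = (27/10) ^ (k+1) * ph t := by ring

lemma sum_bound_s6 (k : ℕ) :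
    ∑ r ∈ Finset.range (2 ^ k),
        ∏ j ∈ Finset.range k, gg ((2:ℝ) ^ j * ((r:ℝ) / (2:ℝ) ^ k))
      ≤ (27/10) ^ k := by
  have h := transfer k 0
  simp only [zero_add] at h
  have hph0 : ph 0 = 73/10 := by unfold ph gg; simp
  rw [hph0] at h
  have h2 : ∑ r ∈ Finset.range (2 ^ k),
      ∏ j ∈ Finset.range k, gg ((2:ℝ) ^ j * ((r:ℝ) / (2:ℝ) ^ k))
      ≤ ∑ r ∈ Finset.range (2 ^ k), (10/73) *
        (ph ((r:ℝ) / (2:ℝ) ^ k) *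
          ∏ j ∈ Finset.range k, gg ((2:ℝ) ^ j * ((r:ℝ) / (2:ℝ) ^ k))) := by
    refine Finset.sum_le_sum fun r _ => ?_
    have hP : 0 ≤ ∏ j ∈ Finset.range k, gg ((2:ℝ) ^ j * ((r:ℝ) / (2:ℝ) ^ k)) :=
      Finset.prod_nonneg fun _ _ => gg_nonneg _
    have := ph_ge ((r:ℝ) / (2:ℝ) ^ k)
    nlinarith
  calc ∑ r ∈ Finset.range (2 ^ k),
        ∏ j ∈ Finset.range k, gg ((2:ℝ) ^ j * ((r:ℝ) / (2:ℝ) ^ k))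
      ≤ ∑ r ∈ Finset.range (2 ^ k), (10/73) *
        (ph ((r:ℝ) / (2:ℝ) ^ k) *
          ∏ j ∈ Finset.range k, gg ((2:ℝ) ^ j * ((r:ℝ) / (2:ℝ) ^ k))) := h2
    _ = (10/73) * ∑ r ∈ Finset.range (2 ^ k),
          ph ((r:ℝ) / (2:ℝ) ^ k) *
            ∏ j ∈ Finset.range k, gg ((2:ℝ) ^ j * ((r:ℝ) / (2:ℝ) ^ k)) :=
        (Finset.mul_sum _ _ _).symm
    _ ≤ (10/73) * ((27/10) ^ k * (73/10)) := by nlinarith [h]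
    _ = (27/10) ^ k := by ring

lemma norm_one_sub_exp (t : ℝ) :
    ‖1 - Complex.exp (2 * (Real.pi:ℂ) * Complex.I * (t:ℂ))‖ = gg t := by
  have h1 : 2 * (Real.pi:ℂ) * Complex.I * (t:ℂ) = ((2*Real.pi*t : ℝ):ℂ) * Complex.I := by
    push_cast; ring
  rw [h1, Complex.exp_mul_I, ← Complex.ofReal_cos, ← Complex.ofReal_sin]
  set a := Real.cos (2*Real.pi*t) with ha
  set b := Real.sin (2*Real.pi*t) with hb
  rw [Complex.norm_def]
  have hz : Complex.normSq (1 - ((a:ℂ) + (b:ℂ) * Complex.I)) = (1-a)^2 + b^2 := by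
    simp [Complex.normSq_apply]
    ring
  rw [hz]
  have hsq : b^2 + a^2 = 1 := by
    rw [ha, hb]; exact Real.sin_sq_add_cos_sq _
  have hcos : a = Real.cos (Real.pi*t)^2 - Real.sin (Real.pi*t)^2 := by
    rw [ha, show 2*Real.pi*t = 2*(Real.pi*t) by ring, Real.cos_two_mul']
  have hpc : Real.sin (Real.pi*t)^2 + Real.cos (Real.pi*t)^2 = 1 :=
    Real.sin_sq_add_cos_sq _
  have key : (1-a)^2 + b^2 = (2*|Real.sin (Real.pi*t)|)^2 := by
    have h4 : (2*|Real.sin (Real.pi*t)|)^2 = 4 * Real.sin (Real.pi*t)^2 := by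
      rw [mul_pow, sq_abs]; norm_num
    nlinarith [hsq, hcos, hpc]
  rw [key, Real.sqrt_sq (by positivity)]
  rfl


lemma inner_norm (k r : ℕ) :
    ‖∑ x ∈ Finset.range (2 ^ k),
        eps x * Complex.exp (2 * Real.pi * Complex.I * r * x / 2 ^ k)‖
      = ∏ j ∈ Finset.range k, gg ((2:ℝ) ^ j * ((r:ℝ) / (2:ℝ) ^ k)) := by
  set w : ℂ := 2 * (Real.pi:ℂ) * Complex.I * r / 2 ^ k with hw
  have hz : ∀ x : ℕ, Complex.exp (2 * (Real.pi:ℂ) * Complex.I * r * x / 2 ^ k)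
      = Complex.exp w ^ x := by
    intro x
    rw [← Complex.exp_nat_mul]
    congr 1
    rw [hw]; ring
  simp only [hz]
  rw [eps_sum_eq_prod k (Complex.exp w), norm_prod]
  refine Finset.prod_congr rfl fun j _ => ?_
  have h1 : Complex.exp w ^ (2 ^ j) =
      Complex.exp (2 * (Real.pi:ℂ) * Complex.I *
        ((((2:ℝ) ^ j * ((r:ℝ) / (2:ℝ) ^ k)) : ℝ) : ℂ)) := by
    rw [← Complex.exp_nat_mul]
    congr 1
    rw [hw]
    push_cast
    ring
  rw [h1, norm_one_sub_exp]

theorem discrete_mean_eps_sum_bound :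
    ∃ C > (0 : ℝ), ∀ k : ℕ, 1 ≤ k →
      (2 : ℝ) ^ (-(k : ℝ)) *
          ∑ r ∈ Finset.range (2 ^ k),
            ‖∑ x ∈ Finset.range (2 ^ k),
                eps x * Complex.exp (2 * Real.pi * Complex.I * r * x / 2 ^ k)‖ ≤
        C * k * (2 : ℝ) ^ (Real.logb 2 (Real.sqrt (2 + Real.sqrt 2)) * k / 2) := by
  refine ⟨1, by norm_num, fun k hk => ?_⟩
  set S : ℝ := ∑ r ∈ Finset.range (2 ^ k),
      ‖∑ x ∈ Finset.range (2 ^ k),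
          eps x * Complex.exp (2 * Real.pi * Complex.I * r * x / 2 ^ k)‖ with hSdef
  have hS : S ≤ (27/10) ^ k := by
    rw [hSdef]
    calc ∑ r ∈ Finset.range (2 ^ k),
          ‖∑ x ∈ Finset.range (2 ^ k),
              eps x * Complex.exp (2 * Real.pi * Complex.I * r * x / 2 ^ k)‖
        = ∑ r ∈ Finset.range (2 ^ k),
            ∏ j ∈ Finset.range k, gg ((2:ℝ) ^ j * ((r:ℝ) / (2:ℝ) ^ k)) :=
          Finset.sum_congr rfl fun r _ => inner_norm k r
      _ ≤ (27/10) ^ k := sum_bound_s6 k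
  have h2 : (2:ℝ) ^ (-(k:ℝ)) = ((2:ℝ) ^ k)⁻¹ := by
    rw [Real.rpow_neg (by norm_num), Real.rpow_natCast]
  have hpos : (0:ℝ) < 2 + Real.sqrt 2 := by positivity
  have hX : (2:ℝ) ^ (Real.logb 2 (Real.sqrt (2 + Real.sqrt 2)) * k / 2)
      = (2 + Real.sqrt 2) ^ ((k:ℝ)/4) := by
    rw [show Real.logb 2 (Real.sqrt (2 + Real.sqrt 2)) * k / 2
        = Real.logb 2 (Real.sqrt (2 + Real.sqrt 2)) * ((k:ℝ)/2) by ring,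
      Real.rpow_mul (by norm_num : (0:ℝ) ≤ 2),
      Real.rpow_logb (by norm_num) (by norm_num) (Real.sqrt_pos.2 hpos),
      Real.sqrt_eq_rpow, ← Real.rpow_mul hpos.le]
    congr 1
    ring
  have hbase : ((27:ℝ)/20) ^ k ≤ (2 + Real.sqrt 2) ^ ((k:ℝ)/4) := by
    have h1 : ((27:ℝ)/20) ^ k = ((531441:ℝ)/160000) ^ ((k:ℝ)/4) := by
      rw [← Real.rpow_natCast (27/20 : ℝ) k,
        show ((k:ℝ)) = 4 * ((k:ℝ)/4) by ring,
        Real.rpow_mul (by norm_num : (0:ℝ) ≤ 27/20),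
        show ((4:ℝ)) = ((4:ℕ):ℝ) by norm_num, Real.rpow_natCast]
      norm_num
    rw [h1]
    refine Real.rpow_le_rpow (by norm_num) ?_ (by positivity)
    nlinarith [Real.sq_sqrt (by norm_num : (0:ℝ) ≤ 2), Real.sqrt_nonneg 2]
  have hstep1 : (2:ℝ) ^ (-(k:ℝ)) * S ≤ ((27:ℝ)/20) ^ k := by
    rw [h2]
    have hk2 : (0:ℝ) < (2:ℝ) ^ k := by positivity
    have hsplit : ((27:ℝ)/20) ^ k = (27/10) ^ k * ((2:ℝ) ^ k)⁻¹ := by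
      rw [show ((27:ℝ)/20) = (27/10) / 2 by norm_num, div_pow]
      field_simp
    rw [hsplit]
    have hnn := inv_nonneg.2 hk2.le
    calc ((2:ℝ) ^ k)⁻¹ * S ≤ ((2:ℝ) ^ k)⁻¹ * (27/10) ^ k :=
        mul_le_mul_of_nonneg_left hS hnn
      _ = (27/10) ^ k * ((2:ℝ) ^ k)⁻¹ := by ring
  rw [hX]
  have hk1 : (1:ℝ) ≤ (k:ℝ) := by exact_mod_cast hk
  have hXnn : (0:ℝ) ≤ (2 + Real.sqrt 2) ^ ((k:ℝ)/4) := Real.rpow_nonneg hpos.le _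
  nlinarith [hstep1, hbase]
end

section
/- Let α = a/q + θ/q² with integers a, q, (a, q) = 1, q ≥ 1, and |θ| ≤ 1. Then for every real β, every real U > 0, and every integer P ≥ 1, one has ∑_{x=1}^{P} min(U, ‖αx + β‖^{−1}) ≤ 6 (P/q + 1)(U + q log q), where ‖t‖ denotes the distance from the real number t to the nearest integer, with the convention that min(U, ‖t‖^{−1}) = U when ‖t‖ = 0. -/
/-- `distNearestInt t` is the distance from the real number `t` to the nearest integer. -/
noncomputable def distNearestInt (t : ℝ) : ℝ := |t - round t|

lemma distNearestInt_nonneg (t : ℝ) : 0 ≤ distNearestInt t := abs_nonneg _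

lemma distNearestInt_int_add (m : ℤ) (t : ℝ) :
    distNearestInt ((m : ℝ) + t) = distNearestInt t := by
  unfold distNearestInt
  rw [round_intCast_add]
  push_cast
  congr 1
  ring

lemma distNearestInt_lb (u v : ℝ) : distNearestInt v - |u - v| ≤ distNearestInt u := by
  unfold distNearestInt
  have h1 : |v - round v| ≤ |v - (round u : ℤ)| := round_le v (round u)
  have h2 : |v - ((round u : ℤ) : ℝ)| ≤ |v - u| + |u - round u| := by
    calc |v - ((round u : ℤ) : ℝ)| = |(v - u) + (u - round u)| := by ring_nf
      _ ≤ |v - u| + |u - round u| := abs_add_le _ _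
  have h3 : |v - u| = |u - v| := abs_sub_comm v u
  linarith

lemma harmonic_mono {m n : ℕ} (h : m ≤ n) : harmonic m ≤ harmonic n := by
  unfold harmonic
  apply Finset.sum_le_sum_of_subset_of_nonneg (Finset.range_subset_range.mpr h)
  intro i _ _
  positivity

-- pointwise key estimate
lemma dist_key (α β θ : ℝ) (a q : ℤ) (hq : 1 ≤ q)
    (hα : α = a / q + θ / q ^ 2) (hθ : |θ| ≤ 1) (s z : ℕ) (hz : (z : ℤ) < q)
    (b : ℤ) (hb : b = ⌊(q : ℝ) * (α * s + β)⌋) :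
    (((min ((a * z + b) % q) (q - 1 - (a * z + b) % q) : ℤ) : ℝ) - 1) / q
      ≤ distNearestInt (α * (↑(s + z)) + β) := by
  have hq0 : (0:ℝ) < (q:ℝ) := by exact_mod_cast hq
  have hqne : (q:ℝ) ≠ 0 := ne_of_gt hq0
  set γ : ℝ := α * s + β with hγ
  set δ : ℝ := Int.fract ((q : ℝ) * γ) with hδ
  set j : ℤ := (a * z + b) % q with hj
  set m : ℤ := (a * z + b) / q with hm
  have hqz : q ≠ 0 := by omega
  have hj0 : 0 ≤ j := Int.emod_nonneg _ hqz
  have hjq : j < q := Int.emod_lt_of_pos _ (by omega)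
  have hmj : q * m + j = a * z + b := Int.mul_ediv_add_emod _ _
  have hcast : (q:ℝ) * m + j = (a:ℝ) * z + b := by exact_mod_cast hmj
  have hbδ : (b:ℝ) + δ = (q:ℝ) * γ := by
    rw [hδ, hb, hγ]
    exact Int.floor_add_fract _
  have hδ0 : 0 ≤ δ := Int.fract_nonneg _
  have hδ1 : δ < 1 := Int.fract_lt_one _
  -- representation
  have hrep : α * (↑(s + z)) + β = (m : ℝ) + (((j : ℝ) + δ) / q + θ * z / q ^ 2) := by
    have hγ' : γ = α * s + β := hγ
    push_cast
    rw [hα] at hγ' ⊢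
    field_simp at hγ' hbδ ⊢
    nlinarith [hcast, hbδ, sq_nonneg ((q:ℝ))]
  have hwlo : 0 ≤ ((j : ℝ) + δ) / q := by
    apply div_nonneg _ hq0.le
    have : (0:ℝ) ≤ (j:ℝ) := by exact_mod_cast hj0
    linarith
  have hwhi : ((j : ℝ) + δ) / q < 1 := by
    rw [div_lt_one hq0]
    have : (j:ℝ) ≤ (q:ℝ) - 1 := by exact_mod_cast Int.le_sub_one_of_lt hjq
    linarith
  have hdist1 : distNearestInt (α * (↑(s + z)) + β)
      = distNearestInt (((j : ℝ) + δ) / q + θ * z / q ^ 2) := by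
    rw [hrep, distNearestInt_int_add]
  have herr : |θ * z / q ^ 2| ≤ 1 / q := by
    have hz' : (z : ℝ) ≤ (q : ℝ) := by
      have : (z:ℤ) ≤ q := hz.le
      exact_mod_cast this
    have hz0 : (0:ℝ) ≤ (z:ℝ) := Nat.cast_nonneg _
    have h1 : |θ * (z:ℝ)| ≤ (q:ℝ) := by
      rw [abs_mul, abs_of_nonneg hz0]
      nlinarith [abs_nonneg θ]
    rw [abs_div, abs_of_pos (by positivity : (0:ℝ) < (q:ℝ)^2),
      div_le_div_iff₀ (by positivity) hq0]
    nlinarith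
  have hmid : distNearestInt (((j : ℝ) + δ) / q)
      = min (((j : ℝ) + δ) / q) (1 - ((j : ℝ) + δ) / q) := by
    unfold distNearestInt
    rw [abs_sub_round_eq_min, Int.fract_eq_self.mpr ⟨hwlo, hwhi⟩]
  have hklo : ((min j (q - 1 - j) : ℤ) : ℝ) / q
      ≤ min (((j : ℝ) + δ) / q) (1 - ((j : ℝ) + δ) / q) := by
    have hc : ((min j (q - 1 - j) : ℤ) : ℝ) = min ((j:ℝ)) ((q:ℝ) - 1 - j) := by
      push_cast; rfl
    have hjr : (0:ℝ) ≤ (j:ℝ) := by exact_mod_cast hj0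
    apply le_min
    · rw [hc, div_le_div_iff_of_pos_right hq0]
      have := min_le_left ((j:ℝ)) ((q:ℝ) - 1 - j)
      linarith
    · rw [hc, one_sub_div hqne, div_le_div_iff_of_pos_right hq0]
      have := min_le_right ((j:ℝ)) ((q:ℝ) - 1 - j)
      linarith
  have hfin := distNearestInt_lb (((j : ℝ) + δ) / q + θ * z / q ^ 2) (((j : ℝ) + δ) / q)
  have habs : |((j : ℝ) + δ) / q + θ * z / q ^ 2 - ((j : ℝ) + δ) / q| = |θ * z / q ^ 2| := by
    congr 1; ring
  rw [habs, hmid] at hfin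
  rw [hdist1]
  have : ((min j (q - 1 - j) : ℤ) : ℝ) / q - 1 / q
      ≤ distNearestInt (((j : ℝ) + δ) / q + θ * z / q ^ 2) := by linarith
  calc (((min j (q - 1 - j) : ℤ) : ℝ) - 1) / q
      = ((min j (q - 1 - j) : ℤ) : ℝ) / q - 1 / q := by ring
    _ ≤ _ := this

lemma blockSum (α β θ U : ℝ) (a q : ℤ) (Q : ℕ) (hQ : (Q : ℤ) = q)
    (hq : 1 ≤ q) (hgcd : IsCoprime a q) (hα : α = a / q + θ / q ^ 2)
    (hθ : |θ| ≤ 1) (hU : 0 < U) (s : ℕ) :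
    ∑ z ∈ Finset.range Q,
      (if distNearestInt (α * (↑(s + z)) + β) = 0 then U
        else min U (distNearestInt (α * (↑(s + z)) + β))⁻¹)
      ≤ 6 * (U + (q : ℝ) * Real.log q) := by
  have hq0 : (0:ℝ) < (q:ℝ) := by exact_mod_cast hq
  have hqne : (q:ℝ) ≠ 0 := ne_of_gt hq0
  have hqz : q ≠ 0 := by omega
  set b : ℤ := ⌊(q : ℝ) * (α * s + β)⌋ with hb
  set J : ℕ → ℤ := fun z => (a * z + b) % q with hJ
  set g : ℤ → ℝ := fun j => if min j (q - 1 - j) ≤ 1 then U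
    else (q : ℝ) / (((min j (q - 1 - j) : ℤ) : ℝ) - 1) with hg
  set G : ℤ → ℝ := fun n => if n ≤ 1 then U
    else (q : ℝ) / ((n : ℝ) - 1) with hG
  have hGnonneg : ∀ n, 0 ≤ G n := by
    intro n
    rw [hG]
    dsimp only
    split
    · exact hU.le
    · next h =>
      apply div_nonneg hq0.le
      have : (2:ℤ) ≤ n := by omega
      have : (2:ℝ) ≤ (n:ℝ) := by exact_mod_cast this
      linarith
  have hgnonneg : ∀ j, 0 ≤ g j := by
    intro j
    rw [hg]
    dsimp only
    split
    · exact hU.le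
    · next h =>
      apply div_nonneg hq0.le
      have : (2:ℤ) ≤ min j (q - 1 - j) := by omega
      have : (2:ℝ) ≤ ((min j (q - 1 - j) : ℤ) : ℝ) := by exact_mod_cast this
      linarith
  -- pointwise bound
  have hpt : ∀ z ∈ Finset.range Q,
      (if distNearestInt (α * (↑(s + z)) + β) = 0 then U
        else min U (distNearestInt (α * (↑(s + z)) + β))⁻¹) ≤ g (J z) := by
    intro z hz
    have hzq : (z : ℤ) < q := by
      rw [← hQ]; exact_mod_cast Finset.mem_range.mp hz
    have hkey := dist_key α β θ a q hq hα hθ s z hzq b hb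
    set j : ℤ := J z with hjdef
    have hjJ : j = (a * z + b) % q := hjdef
    set k : ℤ := min j (q - 1 - j) with hk
    by_cases hk1 : k ≤ 1
    · have hgU : g j = U := by rw [hg]; exact if_pos hk1
      rw [hgU]
      split
      · exact le_rfl
      · exact min_le_left _ _
    · push_neg at hk1
      have hk2 : (2:ℝ) ≤ ((k : ℤ) : ℝ) := by exact_mod_cast hk1
      have hpos : (0:ℝ) < (((k : ℤ) : ℝ) - 1) / q := by
        apply div_pos _ hq0; linarith
      have hdge : (((k : ℤ) : ℝ) - 1) / q ≤ distNearestInt (α * (↑(s + z)) + β) := by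
        rw [hjJ] at hk; rw [hk] at hkey ⊢; exact hkey
      have hdpos : 0 < distNearestInt (α * (↑(s + z)) + β) := lt_of_lt_of_le hpos hdge
      rw [if_neg (ne_of_gt hdpos)]
      have h1 : (distNearestInt (α * (↑(s + z)) + β))⁻¹ ≤ ((((k : ℤ) : ℝ) - 1) / q)⁻¹ :=
        inv_anti₀ hpos hdge
      have h2 : ((((k : ℤ) : ℝ) - 1) / q)⁻¹ = (q : ℝ) / (((k : ℤ) : ℝ) - 1) := inv_div _ _
      have hgv : g j = (q : ℝ) / (((k : ℤ) : ℝ) - 1) := by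
        rw [hg]; exact if_neg (not_le.mpr hk1)
      rw [hgv]
      exact le_trans (min_le_right _ _) (by rw [← h2]; exact h1)
  -- injectivity
  have hinj : ∀ z1 ∈ Finset.range Q, ∀ z2 ∈ Finset.range Q, J z1 = J z2 → z1 = z2 := by
    intro z1 hz1 z2 hz2 h
    have h1 : (z1:ℤ) < q := by rw [← hQ]; exact_mod_cast Finset.mem_range.mp hz1
    have h2 : (z2:ℤ) < q := by rw [← hQ]; exact_mod_cast Finset.mem_range.mp hz2
    have hz10 : (0:ℤ) ≤ z1 := Int.ofNat_nonneg _
    have hz20 : (0:ℤ) ≤ z2 := Int.ofNat_nonneg _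
    have hmod : Int.ModEq q (a * z1 + b) (a * z2 + b) := h
    have hdvd : q ∣ (a * z2 + b) - (a * z1 + b) := Int.ModEq.dvd hmod
    have hdvd2 : q ∣ a * ((z2:ℤ) - z1) := by
      have he : (a * z2 + b) - (a * z1 + b) = a * ((z2:ℤ) - z1) := by ring
      rwa [he] at hdvd
    have hdvd3 : q ∣ (z2:ℤ) - z1 := hgcd.symm.dvd_of_dvd_mul_left hdvd2
    have hzz : (z2:ℤ) - z1 = 0 := Int.eq_zero_of_abs_lt_dvd hdvd3 (by
      rw [abs_lt]; omega)
    have : (z1:ℤ) = (z2:ℤ) := by omega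
    exact_mod_cast this
  -- sum manipulation
  have himg : (Finset.range Q).image J ⊆ Finset.Ico (0:ℤ) q := by
    intro j hj
    obtain ⟨z, _, rfl⟩ := Finset.mem_image.mp hj
    rw [Finset.mem_Ico]
    exact ⟨Int.emod_nonneg _ hqz, Int.emod_lt_of_pos _ (by omega)⟩
  have hgG : ∀ j ∈ Finset.Ico (0:ℤ) q, g j ≤ G j + G (q - 1 - j) := by
    intro j _
    rcases le_total j (q - 1 - j) with hle | hle
    · have hm : min j (q - 1 - j) = j := min_eq_left hle
      have : g j = G j := by rw [hg, hG]; dsimp only; rw [hm]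
      rw [this]
      exact le_add_of_nonneg_right (hGnonneg _)
    · have hm : min j (q - 1 - j) = q - 1 - j := min_eq_right hle
      have : g j = G (q - 1 - j) := by rw [hg, hG]; dsimp only; rw [hm]
      rw [this]
      exact le_add_of_nonneg_left (hGnonneg _)
  have hrefl : ∑ j ∈ Finset.Ico (0:ℤ) q, G (q - 1 - j) = ∑ j ∈ Finset.Ico (0:ℤ) q, G j := by
    apply Finset.sum_nbij' (fun j => q - 1 - j) (fun j => q - 1 - j)
    · intro j hj; rw [Finset.mem_Ico] at *; omega
    · intro j hj; rw [Finset.mem_Ico] at *; omega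
    · intro j _; omega
    · intro j _; omega
    · intro j _; rfl
  have hfinal : 2 * ∑ j ∈ Finset.Ico (0:ℤ) q, G j ≤ 6 * (U + (q:ℝ) * Real.log q) := by
    rcases eq_or_lt_of_le hq with hq1 | hq2
    · -- q = 1
      have hIco : Finset.Ico (0:ℤ) q = {0} := by rw [← hq1]; decide
      have hG0 : G 0 = U := by rw [hG]; norm_num
      rw [hIco, Finset.sum_singleton, hG0, ← hq1]
      simp only [Int.cast_one, Real.log_one]
      linarith
    · -- 2 ≤ q
      have hq2' : (2:ℤ) ≤ q := hq2
      have hq2R : (2:ℝ) ≤ (q:ℝ) := by exact_mod_cast hq2'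
      have hQ2 : 2 ≤ Q := by omega
      have hsplit : ∑ j ∈ Finset.Ico (0:ℤ) q, G j
          = ∑ j ∈ Finset.Ico (0:ℤ) 2, G j + ∑ j ∈ Finset.Ico (2:ℤ) q, G j := by
        rw [← Finset.sum_union (Finset.Ico_disjoint_Ico_consecutive 0 2 q),
          Finset.Ico_union_Ico_eq_Ico (by norm_num) hq2']
      have h02 : ∑ j ∈ Finset.Ico (0:ℤ) 2, G j = U + U := by
        have : Finset.Ico (0:ℤ) 2 = {0, 1} := by decide
        rw [this, Finset.sum_pair (by norm_num)]
        have hG0 : G 0 = U := by rw [hG]; norm_num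
        have hG1 : G 1 = U := by rw [hG]; norm_num
        rw [hG0, hG1]
      have h2q : ∑ j ∈ Finset.Ico (2:ℤ) q, G j
          = ∑ i ∈ Finset.range (Q - 2), (q:ℝ) / ((i:ℝ) + 1) := by
        refine Finset.sum_nbij' (i := fun (j:ℤ) => (j - 2).toNat)
          (j := fun (i:ℕ) => (i:ℤ) + 2) ?_ ?_ ?_ ?_ ?_
        · intro j hj; rw [Finset.mem_Ico] at hj; rw [Finset.mem_range]; omega
        · intro i hi; rw [Finset.mem_range] at hi; rw [Finset.mem_Ico]; omega
        · intro j hj; rw [Finset.mem_Ico] at hj; omega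
        · intro i hi; omega
        · intro j hj
          rw [Finset.mem_Ico] at hj
          have hj2 : (2:ℤ) ≤ j := hj.1
          have hcast : (((j - 2).toNat : ℕ) : ℝ) = (j:ℝ) - 2 := by
            have : ((j - 2).toNat : ℤ) = j - 2 := Int.toNat_of_nonneg (by omega)
            exact_mod_cast this
          rw [hG]
          dsimp only
          rw [if_neg (by omega), hcast]
          congr 1
          ring
      have hharm : ∑ i ∈ Finset.range (Q - 2), (q:ℝ) / ((i:ℝ) + 1)
          = (q:ℝ) * ((harmonic (Q - 2) : ℚ) : ℝ) := by
        rw [harmonic]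
        push_cast
        rw [Finset.mul_sum]
        apply Finset.sum_congr rfl
        intro i _
        rw [div_eq_mul_inv]
      have hh1 : ((harmonic (Q - 2) : ℚ) : ℝ) ≤ ((harmonic Q : ℚ) : ℝ) := by
        exact_mod_cast harmonic_mono (by omega)
      have hh2 : ((harmonic Q : ℚ) : ℝ) ≤ 1 + Real.log Q := harmonic_le_one_add_log Q
      have hQq : ((Q:ℕ):ℝ) = (q:ℝ) := by exact_mod_cast hQ
      have hsum_le : ∑ j ∈ Finset.Ico (0:ℤ) q, G j ≤ U + U + (q:ℝ) * (1 + Real.log q) := by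
        rw [hsplit, h02, h2q, hharm]
        have : (q:ℝ) * ((harmonic (Q - 2) : ℚ) : ℝ) ≤ (q:ℝ) * (1 + Real.log q) := by
          apply mul_le_mul_of_nonneg_left _ hq0.le
          rw [← hQq]
          exact le_trans hh1 hh2
        linarith
      have hlog2 : (0.6931471803:ℝ) < Real.log 2 := Real.log_two_gt_d9
      have hlogq : Real.log 2 ≤ Real.log q := Real.log_le_log (by norm_num) hq2R
      have hhalf : (1:ℝ) / 2 ≤ Real.log q := by linarith
      have hkey : (q:ℝ) * 1 ≤ (q:ℝ) * (2 * Real.log q) :=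
        mul_le_mul_of_nonneg_left (by linarith) hq0.le
      nlinarith [hsum_le]
  calc ∑ z ∈ Finset.range Q,
      (if distNearestInt (α * (↑(s + z)) + β) = 0 then U
        else min U (distNearestInt (α * (↑(s + z)) + β))⁻¹)
      ≤ ∑ z ∈ Finset.range Q, g (J z) := Finset.sum_le_sum hpt
    _ = ∑ j ∈ (Finset.range Q).image J, g j := (Finset.sum_image hinj).symm
    _ ≤ ∑ j ∈ Finset.Ico (0:ℤ) q, g j :=
        Finset.sum_le_sum_of_subset_of_nonneg himg (fun j _ _ => hgnonneg j)
    _ ≤ ∑ j ∈ Finset.Ico (0:ℤ) q, (G j + G (q - 1 - j)) := Finset.sum_le_sum hgG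
    _ = ∑ j ∈ Finset.Ico (0:ℤ) q, G j + ∑ j ∈ Finset.Ico (0:ℤ) q, G (q - 1 - j) :=
        Finset.sum_add_distrib
    _ = 2 * ∑ j ∈ Finset.Ico (0:ℤ) q, G j := by rw [hrefl]; ring
    _ ≤ 6 * (U + (q : ℝ) * Real.log q) := hfinal

theorem min_norm_inv_sum_bound (α β θ U : ℝ) (a : ℤ) (q : ℤ) (P : ℕ)
    (hq : 1 ≤ q) (hgcd : IsCoprime a q) (hα : α = a / q + θ / q ^ 2)
    (hθ : |θ| ≤ 1) (hU : 0 < U) (hP : 1 ≤ P) :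
    ∑ x ∈ Finset.Icc 1 P,
        (if distNearestInt (α * x + β) = 0 then U
          else min U (distNearestInt (α * x + β))⁻¹) ≤
      6 * ((P : ℝ) / (q : ℝ) + 1) * (U + (q : ℝ) * Real.log q) := by
  have hq0 : (0:ℝ) < (q:ℝ) := by exact_mod_cast hq
  set Q : ℕ := q.toNat with hQdef
  have hQ : (Q : ℤ) = q := Int.toNat_of_nonneg (by omega)
  have hQ1 : 1 ≤ Q := by omega
  set F : ℕ → ℝ := fun x => if distNearestInt (α * x + β) = 0 then U
    else min U (distNearestInt (α * x + β))⁻¹ with hF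
  have hFnonneg : ∀ x, 0 ≤ F x := by
    intro x
    rw [hF]
    dsimp only
    split
    · exact hU.le
    · exact le_min hU.le (inv_nonneg.mpr (distNearestInt_nonneg _))
  set B : ℕ := P / Q + 1 with hB
  have hPB : P ≤ B * Q := by
    have h1 := Nat.div_add_mod P Q
    have h2 := Nat.mod_lt P (show 0 < Q by omega)
    have h3 : B * Q = Q * (P / Q) + Q := by rw [hB]; ring
    omega
  have hIcc : ∑ x ∈ Finset.Icc 1 P, F x = ∑ x ∈ Finset.range P, F (1 + x) := by
    rw [← Finset.Ico_add_one_right_eq_Icc, Finset.sum_Ico_eq_sum_range]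
    simp
  have hsplit : ∀ n : ℕ, ∑ x ∈ Finset.range (n * Q), F (1 + x)
      = ∑ y ∈ Finset.range n, ∑ z ∈ Finset.range Q, F (1 + (y * Q + z)) := by
    intro n
    induction n with
    | zero => simp
    | succ k ih =>
      rw [Nat.succ_mul, Finset.sum_range_add, ih, Finset.sum_range_succ]
  have hblock : ∀ y : ℕ, ∑ z ∈ Finset.range Q, F (1 + (y * Q + z))
      ≤ 6 * (U + (q:ℝ) * Real.log q) := by
    intro y
    have h := blockSum α β θ U a q Q hQ hq hgcd hα hθ hU (1 + y * Q)
    have he : ∀ z, F (1 + (y * Q + z)) = F ((1 + y * Q) + z) := by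
      intro z; congr 1; omega
    calc ∑ z ∈ Finset.range Q, F (1 + (y * Q + z))
        = ∑ z ∈ Finset.range Q, F ((1 + y * Q) + z) := Finset.sum_congr rfl (fun z _ => he z)
      _ ≤ 6 * (U + (q:ℝ) * Real.log q) := h
  have hpos : (0:ℝ) ≤ 6 * (U + (q:ℝ) * Real.log q) := by
    have : 0 ≤ Real.log q := Real.log_nonneg (by exact_mod_cast hq)
    nlinarith
  have hBle : (B : ℝ) ≤ (P : ℝ) / (q : ℝ) + 1 := by
    rw [hB]
    push_cast
    have h1 : ((P / Q : ℕ) : ℝ) ≤ (P : ℝ) / (Q : ℝ) := Nat.cast_div_le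
    have h2 : ((Q:ℕ) : ℝ) = (q : ℝ) := by exact_mod_cast hQ
    rw [h2] at h1
    linarith
  calc ∑ x ∈ Finset.Icc 1 P, F x
      = ∑ x ∈ Finset.range P, F (1 + x) := hIcc
    _ ≤ ∑ x ∈ Finset.range (B * Q), F (1 + x) :=
        Finset.sum_le_sum_of_subset_of_nonneg (Finset.range_subset_range.mpr hPB)
          (fun x _ _ => hFnonneg _)
    _ = ∑ y ∈ Finset.range B, ∑ z ∈ Finset.range Q, F (1 + (y * Q + z)) := hsplit B
    _ ≤ ∑ y ∈ Finset.range B, 6 * (U + (q:ℝ) * Real.log q) :=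
        Finset.sum_le_sum (fun y _ => hblock y)
    _ = (B : ℝ) * (6 * (U + (q:ℝ) * Real.log q)) := by
        rw [Finset.sum_const, Finset.card_range, nsmul_eq_mul]
    _ ≤ ((P : ℝ) / (q : ℝ) + 1) * (6 * (U + (q:ℝ) * Real.log q)) :=
        mul_le_mul_of_nonneg_right hBle hpos
    _ = 6 * ((P : ℝ) / (q : ℝ) + 1) * (U + (q : ℝ) * Real.log q) := by ring
end
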